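/- arXiv:2502.16465 — 3 statements merged into one kernel-verified Lean document; each statement's English description precedes it below -/
import Mathlib

section
/- Let G be a finite connected simple graph with maximum degree d_M, diameter D, and fix κ_0 ∈ ℝ. Set I_{κ_0} = ∑_{xy∈E} max{0, κ_0 − κ_LLY(x,y)}. Then the number of vertices n of G satisfies n ≤ 1 + ∑_{k=1}^{D} d_M^k ∏_{i=1}^{k-1} (1 + (I_{κ_0} − i·κ_0)/2). -/
open Finset

/-- A probability measure on a finite set, given as a density. -/
def IsProbMeasure {V : Type*} [Fintype V] (m : V → ℝ) : Prop :=
  (∀ x, 0 ≤ m x) ∧ ∑ x, m x = 1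

/-- A coupling between two probability measures on a finite set. -/
def IsCoupling {V : Type*} [Fintype V] (A : V × V → ℝ) (m₁ m₂ : V → ℝ) : Prop :=
  (∀ p, 0 ≤ A p) ∧ (∀ x, ∑ y, A (x, y) = m₁ x) ∧ (∀ y, ∑ x, A (x, y) = m₂ y)

/-- The Wasserstein-1 (transportation) distance between two probability measures on a
finite set, with respect to a cost `d`. -/
noncomputable def W {V : Type*} [Fintype V] (d : V → V → ℝ) (m₁ m₂ : V → ℝ) : ℝ :=
  sInf {c | ∃ A, IsCoupling A m₁ m₂ ∧ c = ∑ p : V × V, A p * d p.1 p.2}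

lemma W_symm {V : Type*} [Fintype V] (d : V → V → ℝ) (hd : ∀ x y, d x y = d y x)
    (m₁ m₂ : V → ℝ) : W d m₁ m₂ = W d m₂ m₁ := by
  have key : ∀ m₁ m₂ : V → ℝ,
      {c | ∃ A, IsCoupling A m₁ m₂ ∧ c = ∑ p : V × V, A p * d p.1 p.2} ⊆
      {c | ∃ A, IsCoupling A m₂ m₁ ∧ c = ∑ p : V × V, A p * d p.1 p.2} := by
    rintro m₁ m₂ c ⟨A, ⟨h0, h1, h2⟩, rfl⟩
    refine ⟨fun p => A (p.2, p.1), ⟨fun p => h0 _, fun x => h2 x, fun y => h1 y⟩, ?_⟩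
    refine Fintype.sum_equiv (Equiv.prodComm V V) _ _ ?_
    intro p
    simp [Equiv.prodComm, hd p.1 p.2]
  unfold W
  congr 1
  exact Set.Subset.antisymm (key m₁ m₂) (key m₂ m₁)

/-- The `α`-lazy random walk measure at a vertex `x` of a graph. -/
noncomputable def lazyWalk {V : Type*} [Fintype V] [DecidableEq V] (G : SimpleGraph V)
    [DecidableRel G.Adj] (α : ℝ) (x : V) : V → ℝ :=
  fun v => if v = x then α else if G.Adj x v then (1 - α) / (G.degree x) else 0

/-- The `α`-Ricci curvature `κ_α(x,y) = 1 - W(m_x^α, m_y^α)/d(x,y)`. -/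
noncomputable def kappaAlpha {V : Type*} [Fintype V] [DecidableEq V] (G : SimpleGraph V)
    [DecidableRel G.Adj] (α : ℝ) (x y : V) : ℝ :=
  1 - W (fun a b => (G.dist a b : ℝ)) (lazyWalk G α x) (lazyWalk G α y) / (G.dist x y)

lemma kappaAlpha_symm {V : Type*} [Fintype V] [DecidableEq V] (G : SimpleGraph V)
    [DecidableRel G.Adj] (α : ℝ) (x y : V) :
    kappaAlpha G α x y = kappaAlpha G α y x := by
  unfold kappaAlpha
  rw [W_symm _ (fun a b => by rw [SimpleGraph.dist_comm]),
    SimpleGraph.dist_comm]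

/-- The Lin–Lu–Yau Ricci curvature `κ_LLY(x,y) = lim_{α → 1⁻} κ_α(x,y)/(1-α)`. -/
noncomputable def kappaLLY {V : Type*} [Fintype V] [DecidableEq V] (G : SimpleGraph V)
    [DecidableRel G.Adj] (x y : V) : ℝ :=
  Filter.limUnder (nhdsWithin 1 (Set.Ico (0:ℝ) 1)) (fun α => kappaAlpha G α x y / (1 - α))

lemma kappaLLY_symm {V : Type*} [Fintype V] [DecidableEq V] (G : SimpleGraph V)
    [DecidableRel G.Adj] (x y : V) : kappaLLY G x y = kappaLLY G y x := by
  unfold kappaLLY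
  congr 1
  funext α
  rw [kappaAlpha_symm]

/-- Integral `α`-Ricci curvature `I^α_{κ₀}`: total amount of `α`-Ricci curvature below the
threshold `(1-α)κ₀`, summed over the edges of `G`. -/
noncomputable def IAlpha {V : Type*} [Fintype V] [DecidableEq V] (G : SimpleGraph V)
    [DecidableRel G.Adj] (α κ₀ : ℝ) : ℝ :=
  ∑ e ∈ G.edgeFinset,
    Sym2.lift ⟨fun x y => max 0 ((1 - α) * κ₀ - kappaAlpha G α x y),
      fun x y => by simp only []; rw [kappaAlpha_symm]⟩ e

/-- Integral Lin–Lu–Yau Ricci curvature `I_{κ₀}`: total amount of Lin–Lu–Yau Ricci curvature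
below the threshold `κ₀`, summed over the edges of `G`. -/
noncomputable def ILLY {V : Type*} [Fintype V] [DecidableEq V] (G : SimpleGraph V)
    [DecidableRel G.Adj] (κ₀ : ℝ) : ℝ :=
  ∑ e ∈ G.edgeFinset,
    Sym2.lift ⟨fun x y => max 0 (κ₀ - kappaLLY G x y),
      fun x y => by simp only []; rw [kappaLLY_symm]⟩ e

/-- The diameter of a finite graph. -/
noncomputable def gDiam {V : Type*} [Fintype V] (G : SimpleGraph V) : ℕ :=
  Finset.univ.sup fun p : V × V => G.dist p.1 p.2

set_option linter.unusedSectionVars false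
section Aux

variable {V : Type*} [Fintype V] [DecidableEq V] (G : SimpleGraph V) [DecidableRel G.Adj]

lemma lazyWalk_nonneg {α : ℝ} (h0 : 0 ≤ α) (h1 : α ≤ 1) (x v : V) :
    0 ≤ lazyWalk G α x v := by
  unfold lazyWalk
  split_ifs with h h'
  · exact h0
  · exact div_nonneg (by linarith) (Nat.cast_nonneg _)
  · exact le_refl _

lemma sum_lazyWalk_mul (α : ℝ) (x : V) (f : V → ℝ) :
    ∑ v, lazyWalk G α x v * f v
      = α * f x + (1 - α) / (G.degree x) * ∑ w ∈ G.neighborFinset x, f w := by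
  classical
  have hxn : x ∉ G.neighborFinset x := by simp
  rw [← Finset.sum_subset (Finset.subset_univ (insert x (G.neighborFinset x)))]
  · rw [Finset.sum_insert hxn]
    have h1 : lazyWalk G α x x * f x = α * f x := by simp [lazyWalk]
    have h2 : ∀ w ∈ G.neighborFinset x, lazyWalk G α x w * f w
        = (1 - α) / (G.degree x) * f w := by
      intro w hw
      rw [SimpleGraph.mem_neighborFinset] at hw
      simp [lazyWalk, hw.ne', hw]
    rw [h1, Finset.sum_congr rfl h2, Finset.mul_sum]
  · intro v _ hv
    simp only [Finset.mem_insert, SimpleGraph.mem_neighborFinset] at hv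
    push_neg at hv
    simp [lazyWalk, hv.1, hv.2]

lemma isProbMeasure_lazyWalk {α : ℝ} (h0 : 0 ≤ α) (h1 : α ≤ 1) {x : V}
    (hx : 0 < G.degree x) : IsProbMeasure (lazyWalk G α x) := by
  constructor
  · exact fun v => lazyWalk_nonneg G h0 h1 x v
  · have := sum_lazyWalk_mul G α x (fun _ => 1)
    simp only [mul_one] at this
    rw [this, Finset.sum_const, SimpleGraph.card_neighborFinset_eq_degree]
    have hd : (G.degree x : ℝ) ≠ 0 := Nat.cast_ne_zero.mpr hx.ne'
    field_simp
    simp only [nsmul_eq_mul, mul_one]; ring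

lemma couplingSet_nonempty {m₁ m₂ : V → ℝ} (h₁ : IsProbMeasure m₁) (h₂ : IsProbMeasure m₂)
    (d : V → V → ℝ) :
    {c | ∃ A, IsCoupling A m₁ m₂ ∧ c = ∑ p : V × V, A p * d p.1 p.2}.Nonempty := by
  refine ⟨_, ⟨fun p => m₁ p.1 * m₂ p.2, ⟨fun p => mul_nonneg (h₁.1 _) (h₂.1 _), ?_, ?_⟩, rfl⟩⟩
  · intro x; simp only []; rw [← Finset.mul_sum, h₂.2, mul_one]
  · intro y; simp only []; rw [← Finset.sum_mul, h₁.2, one_mul]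

lemma couplingSet_bddBelow {m₁ m₂ : V → ℝ} (d : V → V → ℝ) (hd : ∀ a b, 0 ≤ d a b) :
    BddBelow {c | ∃ A, IsCoupling A m₁ m₂ ∧ c = ∑ p : V × V, A p * d p.1 p.2} := by
  refine ⟨0, ?_⟩
  rintro c ⟨A, hA, rfl⟩
  exact Finset.sum_nonneg fun p _ => mul_nonneg (hA.1 p) (hd _ _)

lemma W_le_cost {m₁ m₂ : V → ℝ} {A : V × V → ℝ} (d : V → V → ℝ) (hd : ∀ a b, 0 ≤ d a b)
    (hA : IsCoupling A m₁ m₂) :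
    W d m₁ m₂ ≤ ∑ p : V × V, A p * d p.1 p.2 :=
  csInf_le (couplingSet_bddBelow d hd) ⟨A, hA, rfl⟩

lemma le_W {m₁ m₂ : V → ℝ} (h₁ : IsProbMeasure m₁) (h₂ : IsProbMeasure m₂)
    (d : V → V → ℝ) (f : V → ℝ) (hf : ∀ a b, f b - f a ≤ d a b) :
    (∑ v, m₂ v * f v) - ∑ v, m₁ v * f v ≤ W d m₁ m₂ := by
  refine le_csInf (couplingSet_nonempty h₁ h₂ d) ?_
  rintro c ⟨A, ⟨hA0, hA1, hA2⟩, rfl⟩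
  have key : ∑ p : V × V, A p * (f p.2 - f p.1) ≤ ∑ p : V × V, A p * d p.1 p.2 :=
    Finset.sum_le_sum fun p _ => mul_le_mul_of_nonneg_left (hf p.1 p.2) (hA0 p)
  refine le_trans (le_of_eq ?_) key
  have e1 : ∑ p : V × V, A p * f p.2 = ∑ v, m₂ v * f v := by
    rw [Fintype.sum_prod_type, Finset.sum_comm]
    exact Finset.sum_congr rfl fun y _ => by simp only []; rw [← Finset.sum_mul, hA2 y]
  have e2 : ∑ p : V × V, A p * f p.1 = ∑ v, m₁ v * f v := by
    rw [Fintype.sum_prod_type]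
    exact Finset.sum_congr rfl fun x _ => by simp only []; rw [← Finset.sum_mul, hA1 x]
  simp_rw [mul_sub]
  rw [Finset.sum_sub_distrib, e1, e2]

end Aux
section Aux2

open Set Filter

variable {V : Type*} [Fintype V] [DecidableEq V] (G : SimpleGraph V) [DecidableRel G.Adj]

lemma kappaAlpha_div_mono (hG : G.Connected) {x y : V}
    (hdx : 0 < G.degree x) (hdy : 0 < G.degree y) (hxy : x ≠ y) {α₁ α₂ : ℝ}
    (h0 : 0 ≤ α₁) (h12 : α₁ ≤ α₂) (h2 : α₂ < 1) :
    kappaAlpha G α₁ x y / (1 - α₁) ≤ kappaAlpha G α₂ x y / (1 - α₂) := by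
  have h1 : α₁ < 1 := lt_of_le_of_lt h12 h2
  have hD₀ : (0:ℝ) < (G.dist x y : ℝ) := by
    exact_mod_cast hG.pos_dist_of_ne hxy
  set D₀ : ℝ := (G.dist x y : ℝ) with hD₀def
  set t : ℝ := (1 - α₂) / (1 - α₁) with htdef
  have ht0 : 0 < t := div_pos (by linarith) (by linarith)
  have ht1 : t ≤ 1 := by
    rw [htdef, div_le_one (by linarith)]; linarith
  have htt : t * (1 - α₁) = 1 - α₂ := div_mul_cancel₀ _ (by linarith)
  have hcomb : ∀ z v : V, lazyWalk G α₂ z v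
      = t * lazyWalk G α₁ z v + (1 - t) * (if v = z then (1:ℝ) else 0) := by
    intro z v
    unfold lazyWalk
    split_ifs with h h'
    · rw [mul_one]; nlinarith [htt]
    · rw [mul_zero, add_zero, mul_div_assoc', htt]
    · simp
  set d : V → V → ℝ := fun a b => (G.dist a b : ℝ) with hddef
  have hd0 : ∀ a b, 0 ≤ d a b := fun a b => Nat.cast_nonneg _
  have hp1x := isProbMeasure_lazyWalk G h0 h1.le hdx
  have hp1y := isProbMeasure_lazyWalk G h0 h1.le hdy
  set W₁ : ℝ := W d (lazyWalk G α₁ x) (lazyWalk G α₁ y) with hW₁def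
  set W₂ : ℝ := W d (lazyWalk G α₂ x) (lazyWalk G α₂ y) with hW₂def
  have main : ∀ c ∈ {c | ∃ A, IsCoupling A (lazyWalk G α₁ x) (lazyWalk G α₁ y) ∧
      c = ∑ p : V × V, A p * d p.1 p.2}, W₂ ≤ t * c + (1 - t) * D₀ := by
    rintro c ⟨A, hA, rfl⟩
    set A' : V × V → ℝ :=
      fun p => t * A p + (1 - t) * (if p = (x, y) then 1 else 0) with hA'def
    have hA' : IsCoupling A' (lazyWalk G α₂ x) (lazyWalk G α₂ y) := by
      refine ⟨?_, ?_, ?_⟩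
      · intro p
        have := hA.1 p
        have : 0 ≤ (if p = (x, y) then (1:ℝ) else 0) := by split_ifs <;> norm_num
        exact add_nonneg (mul_nonneg ht0.le (hA.1 p)) (mul_nonneg (by linarith) this)
      · intro a
        simp only [hA'def]
        rw [Finset.sum_add_distrib, ← Finset.mul_sum, ← Finset.mul_sum, hA.2.1 a,
          hcomb x a]
        congr 2
        by_cases hax : a = x
        · subst hax
          simp [Prod.ext_iff]
        · simp [Prod.ext_iff, hax]
      · intro b
        simp only [hA'def]
        rw [Finset.sum_add_distrib, ← Finset.mul_sum, ← Finset.mul_sum, hA.2.2 b,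
          hcomb y b]
        congr 2
        by_cases hby : b = y
        · subst hby
          simp [Prod.ext_iff]
        · simp [Prod.ext_iff, hby]
    have cost : ∑ p : V × V, A' p * d p.1 p.2
        = t * (∑ p : V × V, A p * d p.1 p.2) + (1 - t) * D₀ := by
      simp only [hA'def, add_mul, mul_assoc]
      rw [Finset.sum_add_distrib, ← Finset.mul_sum, ← Finset.mul_sum]
      congr 2
      have : ∀ p : V × V, (if p = (x, y) then (1:ℝ) else 0) * d p.1 p.2
          = if p = (x, y) then d p.1 p.2 else 0 := by
        intro p; split_ifs <;> simp
      simp_rw [this]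
      rw [Finset.sum_ite_eq' Finset.univ (x, y) (fun p => d p.1 p.2)]
      simp
      rfl
    calc W₂ ≤ ∑ p : V × V, A' p * d p.1 p.2 := W_le_cost d hd0 hA'
    _ = t * (∑ p : V × V, A p * d p.1 p.2) + (1 - t) * D₀ := cost
  have claim : W₂ ≤ t * W₁ + (1 - t) * D₀ := by
    have step : (W₂ - (1 - t) * D₀) / t ≤ W₁ := by
      refine le_csInf (couplingSet_nonempty hp1x hp1y d) ?_
      intro c hc
      rw [div_le_iff₀ ht0]
      have := main c hc
      linarith
    rw [div_le_iff₀ ht0] at step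
    linarith
  have hk1 : kappaAlpha G α₁ x y = 1 - W₁ / D₀ := rfl
  have hk2 : kappaAlpha G α₂ x y = 1 - W₂ / D₀ := rfl
  rw [hk1, hk2, div_le_div_iff₀ (by linarith) (by linarith)]
  have e1 : (1 - W₁ / D₀) = (D₀ - W₁) / D₀ := by field_simp
  have e2 : (1 - W₂ / D₀) = (D₀ - W₂) / D₀ := by field_simp
  rw [e1, e2, div_mul_eq_mul_div, div_mul_eq_mul_div, div_le_div_iff₀ hD₀ hD₀]
  have key2 : (1 - α₂) * (D₀ - W₁) ≤ (1 - α₁) * (D₀ - W₂) := by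
    have hstep : t * (D₀ - W₁) ≤ D₀ - W₂ := by nlinarith
    rw [htdef, div_mul_eq_mul_div, div_le_iff₀ (by linarith : (0:ℝ) < 1 - α₁)] at hstep
    nlinarith
  nlinarith [key2, hD₀]

lemma kappaLLY_le (hG : G.Connected) {x y : V}
    (hdx : 0 < G.degree x) (hdy : 0 < G.degree y) (hxy : x ≠ y) {c : ℝ}
    (hc : ∀ α : ℝ, 0 ≤ α → α < 1 → kappaAlpha G α x y / (1 - α) ≤ c) :
    kappaLLY G x y ≤ c := by
  classical
  set hfun : ℝ → ℝ := fun α => kappaAlpha G α x y / (1 - α) with hfd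
  set h' : ℝ → ℝ := fun α => hfun (max α 0) with h'd
  have hmem : ∀ a : ℝ, a < 1 → 0 ≤ max a 0 ∧ max a 0 < 1 := by
    intro a ha
    exact ⟨le_max_right _ _, max_lt ha one_pos⟩
  have mono' : MonotoneOn h' (Iio (1:ℝ)) := by
    intro a ha b hb hab
    exact kappaAlpha_div_mono G hG hdx hdy hxy (le_max_right a 0)
      (max_le_max hab le_rfl) (hmem b hb).2
  have bdd : BddAbove (h' '' Iio (1:ℝ)) := by
    refine ⟨c, ?_⟩
    rintro _ ⟨a, ha, rfl⟩
    exact hc _ (hmem a ha).1 (hmem a ha).2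
  have T := mono'.tendsto_nhdsLT bdd
  set L : ℝ := sSup (h' '' Iio (1:ℝ)) with hLdef
  have T2 : Tendsto h' (nhdsWithin 1 (Set.Ico (0:ℝ) 1)) (nhds L) :=
    T.mono_left (nhdsWithin_mono 1 Set.Ico_subset_Iio_self)
  have T3 : Tendsto hfun (nhdsWithin 1 (Set.Ico (0:ℝ) 1)) (nhds L) := by
    refine Tendsto.congr' ?_ T2
    filter_upwards [self_mem_nhdsWithin] with a ha
    simp only [h'd, hfd, max_eq_left ha.1]
  haveI : (nhdsWithin (1:ℝ) (Set.Ico (0:ℝ) 1)).NeBot := by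
    rw [← mem_closure_iff_nhdsWithin_neBot, closure_Ico (zero_ne_one)]
    exact ⟨zero_le_one, le_rfl⟩
  have hLLY : kappaLLY G x y = L := by
    unfold kappaLLY
    exact T3.limUnder_eq
  rw [hLLY, hLdef]
  refine csSup_le ⟨h' 0, Set.mem_image_of_mem _ (by norm_num)⟩ ?_
  rintro _ ⟨a, ha, rfl⟩
  exact hc _ (hmem a ha).1 (hmem a ha).2

end Aux2
section Aux3

variable {V : Type*} [Fintype V] [DecidableEq V] (G : SimpleGraph V) [DecidableRel G.Adj]

lemma dist_getVert_le (hG : G.Connected) {u v : V} (p : G.Walk u v) :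
    ∀ i : ℕ, G.dist u (p.getVert i) ≤ i := by
  induction p with
  | nil => intro i; simp [SimpleGraph.Walk.getVert, SimpleGraph.dist_self]
  | @cons a b w h q ih =>
    intro i
    cases i with
    | zero => simp [SimpleGraph.Walk.getVert, SimpleGraph.dist_self]
    | succ n =>
      have h1 : G.dist a b ≤ 1 := by
        rw [SimpleGraph.dist_eq_one_iff_adj.mpr h]
      calc G.dist a ((SimpleGraph.Walk.cons h q).getVert (n+1))
          ≤ G.dist a b + G.dist b (q.getVert n) := hG.dist_triangle
        _ ≤ 1 + n := add_le_add h1 (ih n)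
        _ = n + 1 := by omega

lemma exists_pred (hG : G.Connected) {x₀ y : V} {k : ℕ} (hk : G.dist x₀ y = k + 1) :
    ∃ z : V, G.Adj z y ∧ G.dist x₀ z = k := by
  obtain ⟨p, hp⟩ := hG.exists_walk_length_eq_dist x₀ y
  rw [hk] at hp
  refine ⟨p.getVert k, ?_, ?_⟩
  · have := p.adj_getVert_succ (i := k) (by omega)
    rwa [show p.getVert (k+1) = y by rw [← hp]; exact p.getVert_length] at this
  · have hle : G.dist x₀ (p.getVert k) ≤ k := dist_getVert_le G hG p k
    have hadj : G.Adj (p.getVert k) y := by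
      have := p.adj_getVert_succ (i := k) (by omega)
      rwa [show p.getVert (k+1) = y by rw [← hp]; exact p.getVert_length] at this
    have hge : k ≤ G.dist x₀ (p.getVert k) := by
      have h1 : G.dist x₀ y ≤ G.dist x₀ (p.getVert k) + G.dist (p.getVert k) y :=
        hG.dist_triangle
      have h2 : G.dist (p.getVert k) y = 1 := SimpleGraph.dist_eq_one_iff_adj.mpr hadj
      omega
    omega

lemma exists_dist_eq' (hG : G.Connected) (x₀ : V) :
    ∀ (m : ℕ) (y : V), G.dist x₀ y = m → ∀ i ≤ m, ∃ w : V, G.dist x₀ w = i := by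
  intro m
  induction m with
  | zero => intro y _ i hi; exact ⟨x₀, by simpa [Nat.le_zero.mp hi] using G.dist_self⟩
  | succ n ih =>
    intro y hy i hi
    rcases Nat.lt_or_ge i (n+1) with hlt | hge
    · obtain ⟨z, _, hz⟩ := exists_pred G hG hy
      exact ih z hz i (by omega)
    · exact ⟨y, by omega⟩

lemma degree_pos_of_connected (hG : G.Connected) [Nontrivial V] (v : V) :
    0 < G.degree v := by
  obtain ⟨u, hu⟩ := exists_ne v
  have hd : G.dist v u ≠ 0 := by
    intro h
    exact hu ((hG.dist_eq_zero_iff).mp h).symm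
  obtain ⟨p, hp⟩ := hG.exists_walk_length_eq_dist v u
  have hnil : ¬ p.Nil := by
    intro hnil
    rw [SimpleGraph.Walk.nil_iff_length_eq] at hnil
    omega
  rw [G.degree_pos_iff_exists_adj]
  exact ⟨p.getVert 1, p.adj_snd hnil⟩

/-- `Tq G x₀ v = ∑_{w ~ v} (d(x₀,w) - d(x₀,v))`. -/
noncomputable def Tq (x₀ v : V) : ℝ :=
  ∑ w ∈ G.neighborFinset v, ((G.dist x₀ w : ℝ) - (G.dist x₀ v : ℝ))

lemma Tq_self (x₀ : V) : Tq G x₀ x₀ = G.degree x₀ := by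
  unfold Tq
  have : ∀ w ∈ G.neighborFinset x₀, ((G.dist x₀ w : ℝ) - (G.dist x₀ x₀ : ℝ)) = 1 := by
    intro w hw
    rw [SimpleGraph.mem_neighborFinset] at hw
    rw [SimpleGraph.dist_eq_one_iff_adj.mpr hw, G.dist_self]
    norm_num
  rw [Finset.sum_congr rfl this, Finset.sum_const, SimpleGraph.card_neighborFinset_eq_degree,
    nsmul_eq_mul, mul_one]

lemma dist_sub_le_one (hG : G.Connected) (x₀ : V) {v w : V} (hvw : G.Adj v w) :
    |((G.dist x₀ w : ℝ) - (G.dist x₀ v : ℝ))| ≤ 1 := by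
  rw [abs_le]
  have h1 : G.dist x₀ w ≤ G.dist x₀ v + 1 := by
    have := hG.dist_triangle (u := x₀) (v := v) (w := w)
    rw [SimpleGraph.dist_eq_one_iff_adj.mpr hvw] at this
    omega
  have h2 : G.dist x₀ v ≤ G.dist x₀ w + 1 := by
    have := hG.dist_triangle (u := x₀) (v := w) (w := v)
    rw [SimpleGraph.dist_eq_one_iff_adj.mpr hvw.symm] at this
    omega
  constructor
  · have : (G.dist x₀ v : ℝ) ≤ (G.dist x₀ w : ℝ) + 1 := by exact_mod_cast h2
    linarith
  · have : (G.dist x₀ w : ℝ) ≤ (G.dist x₀ v : ℝ) + 1 := by exact_mod_cast h1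
    linarith

lemma neg_degree_le_Tq (hG : G.Connected) (x₀ v : V) :
    -(G.degree v : ℝ) ≤ Tq G x₀ v := by
  unfold Tq
  have : ∀ w ∈ G.neighborFinset v, (-1 : ℝ) ≤ ((G.dist x₀ w : ℝ) - (G.dist x₀ v : ℝ)) := by
    intro w hw
    rw [SimpleGraph.mem_neighborFinset] at hw
    have := dist_sub_le_one G hG x₀ hw
    rw [abs_le] at this
    exact this.1
  calc -(G.degree v : ℝ) = ∑ _w ∈ G.neighborFinset v, (-1 : ℝ) := by
        rw [Finset.sum_const, SimpleGraph.card_neighborFinset_eq_degree]; ring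
    _ ≤ _ := Finset.sum_le_sum this

lemma out_le_Tq (hG : G.Connected) (x₀ y : V) {k : ℕ} (hy : G.dist x₀ y = k) :
    (((G.neighborFinset y).filter fun w => G.dist x₀ w = k + 1).card : ℝ)
      ≤ (Tq G x₀ y + G.degree y) / 2 := by
  have key : ∀ w ∈ G.neighborFinset y,
      2 * (if G.dist x₀ w = k + 1 then (1:ℝ) else 0) - 1
        ≤ ((G.dist x₀ w : ℝ) - (G.dist x₀ y : ℝ)) := by
    intro w hw
    rw [SimpleGraph.mem_neighborFinset] at hw
    have habs := dist_sub_le_one G hG x₀ hw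
    rw [abs_le] at habs
    split_ifs with h
    · rw [h, hy]; push_cast; norm_num
    · linarith [habs.1]
  have hsum := Finset.sum_le_sum key
  rw [Finset.sum_sub_distrib, Finset.sum_const, ← Finset.mul_sum,
    SimpleGraph.card_neighborFinset_eq_degree] at hsum
  rw [Finset.sum_boole] at hsum
  unfold Tq
  simp only [nsmul_eq_mul, mul_one] at hsum
  linarith

end Aux3
section Aux4

variable {V : Type*} [Fintype V] [DecidableEq V] (G : SimpleGraph V) [DecidableRel G.Adj]

lemma lazy_integral (x₀ : V) {α : ℝ} (v : V) (hdv : 0 < G.degree v) :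
    ∑ w, lazyWalk G α v w * (G.dist x₀ w : ℝ)
      = (G.dist x₀ v : ℝ) + (1 - α) * (Tq G x₀ v / G.degree v) := by
  rw [sum_lazyWalk_mul]
  have hT : Tq G x₀ v = (∑ w ∈ G.neighborFinset v, (G.dist x₀ w : ℝ))
      - (G.degree v : ℝ) * (G.dist x₀ v : ℝ) := by
    unfold Tq
    rw [Finset.sum_sub_distrib, Finset.sum_const, SimpleGraph.card_neighborFinset_eq_degree,
      nsmul_eq_mul]
  have hd : (G.degree v : ℝ) ≠ 0 := Nat.cast_ne_zero.mpr hdv.ne'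
  rw [hT]
  field_simp
  ring

lemma kappaAlpha_edge_est (hG : G.Connected) (x₀ : V) {z y : V}
    (hdz : 0 < G.degree z) (hdy : 0 < G.degree y) (hadj : G.Adj z y)
    (hstep : G.dist x₀ y = G.dist x₀ z + 1) {α : ℝ} (h0 : 0 ≤ α) (h1 : α < 1) :
    kappaAlpha G α z y / (1 - α)
      ≤ Tq G x₀ z / G.degree z - Tq G x₀ y / G.degree y := by
  set f : V → ℝ := fun v => (G.dist x₀ v : ℝ) with hfdef
  have hf : ∀ a b : V, f b - f a ≤ (G.dist a b : ℝ) := by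
    intro a b
    have := hG.dist_triangle (u := x₀) (v := a) (w := b)
    have h' : (G.dist x₀ b : ℝ) ≤ (G.dist x₀ a : ℝ) + (G.dist a b : ℝ) := by exact_mod_cast this
    simp only [hfdef]
    linarith
  have hpz := isProbMeasure_lazyWalk G h0 h1.le hdz
  have hpy := isProbMeasure_lazyWalk G h0 h1.le hdy
  have hW := le_W hpz hpy (fun a b => (G.dist a b : ℝ)) f hf
  rw [lazy_integral G x₀ z hdz, lazy_integral G x₀ y hdy] at hW
  have hdist1 : (G.dist z y : ℝ) = 1 := by
    rw [SimpleGraph.dist_eq_one_iff_adj.mpr hadj]; norm_num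
  have hstep' : (G.dist x₀ y : ℝ) = (G.dist x₀ z : ℝ) + 1 := by exact_mod_cast hstep
  have hkappa : kappaAlpha G α z y
      = 1 - W (fun a b => (G.dist a b : ℝ)) (lazyWalk G α z) (lazyWalk G α y) := by
    unfold kappaAlpha
    rw [hdist1, div_one]
  rw [div_le_iff₀ (by linarith : (0:ℝ) < 1 - α), hkappa]
  linarith

lemma kappaLLY_edge (hG : G.Connected) (x₀ : V) {z y : V}
    (hdz : 0 < G.degree z) (hdy : 0 < G.degree y) (hadj : G.Adj z y)
    (hstep : G.dist x₀ y = G.dist x₀ z + 1) :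
    kappaLLY G z y ≤ Tq G x₀ z / G.degree z - Tq G x₀ y / G.degree y :=
  kappaLLY_le G hG hdz hdy hadj.ne
    (fun α h0 h1 => kappaAlpha_edge_est G hG x₀ hdz hdy hadj hstep h0 h1)

/-- The summand of `ILLY`. -/
noncomputable def edgeDef (κ₀ : ℝ) : Sym2 V → ℝ :=
  Sym2.lift ⟨fun x y => max 0 (κ₀ - kappaLLY G x y),
    fun x y => by simp only []; rw [kappaLLY_symm]⟩

lemma ILLY_eq (κ₀ : ℝ) : ILLY G κ₀ = ∑ e ∈ G.edgeFinset, edgeDef G κ₀ e := rfl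

lemma edgeDef_mk (κ₀ : ℝ) (a b : V) :
    edgeDef G κ₀ s(a, b) = max 0 (κ₀ - kappaLLY G a b) := rfl

lemma edgeDef_nonneg (κ₀ : ℝ) (e : Sym2 V) : 0 ≤ edgeDef G κ₀ e := by
  induction e using Sym2.ind with
  | _ a b => rw [edgeDef_mk]; exact le_max_left _ _

lemma chain_lemma (hG : G.Connected) [Nontrivial V] (κ₀ : ℝ) (x₀ : V) :
    ∀ (k : ℕ) (y : V), G.dist x₀ y = k →
      ∃ s : Finset (Sym2 V), s ⊆ G.edgeFinset ∧ (∀ e ∈ s, ∀ v ∈ e, G.dist x₀ v ≤ k) ∧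
        (k : ℝ) * κ₀ - ∑ e ∈ s, edgeDef G κ₀ e ≤ 1 - Tq G x₀ y / G.degree y := by
  intro k
  induction k with
  | zero =>
    intro y hy
    have hyx : x₀ = y := (hG.dist_eq_zero_iff).mp hy
    subst hyx
    refine ⟨∅, Finset.empty_subset _, by simp, ?_⟩
    have hd : (G.degree x₀ : ℝ) ≠ 0 :=
      Nat.cast_ne_zero.mpr (degree_pos_of_connected G hG x₀).ne'
    rw [Tq_self]
    simp only [Finset.sum_empty, Nat.cast_zero, zero_mul, sub_zero]
    rw [div_self hd]
    norm_num
  | succ k ih =>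
    intro y hy
    obtain ⟨z, hzy, hz⟩ := exists_pred G hG hy
    obtain ⟨s, hs1, hs2, hineq⟩ := ih z hz
    have hdz := degree_pos_of_connected G hG z
    have hdy := degree_pos_of_connected G hG y
    have hκ : kappaLLY G z y ≤ Tq G x₀ z / G.degree z - Tq G x₀ y / G.degree y :=
      kappaLLY_edge G hG x₀ hdz hdy hzy (by omega)
    have he₀ : s(z, y) ∈ G.edgeFinset := by
      rw [SimpleGraph.mem_edgeFinset, SimpleGraph.mem_edgeSet]
      exact hzy
    have he₀s : s(z, y) ∉ s := by
      intro h
      have := hs2 _ h y (Sym2.mem_mk_right z y)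
      omega
    refine ⟨insert s(z, y) s, Finset.insert_subset he₀ hs1, ?_, ?_⟩
    · intro e he v hv
      rcases Finset.mem_insert.mp he with rfl | hes
      · rcases Sym2.mem_iff.mp hv with rfl | rfl
        · omega
        · omega
      · exact le_trans (hs2 e hes v hv) (by omega)
    · rw [Finset.sum_insert he₀s, edgeDef_mk]
      have hmax : κ₀ - kappaLLY G z y ≤ max 0 (κ₀ - kappaLLY G z y) := le_max_right _ _
      push_cast
      linarith

lemma chain_ILLY (hG : G.Connected) [Nontrivial V] (κ₀ : ℝ) (x₀ : V)
    (k : ℕ) (y : V) (hy : G.dist x₀ y = k) :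
    (k : ℝ) * κ₀ - ILLY G κ₀ ≤ 1 - Tq G x₀ y / G.degree y := by
  obtain ⟨s, hs1, _, hineq⟩ := chain_lemma G hG κ₀ x₀ k y hy
  have : ∑ e ∈ s, edgeDef G κ₀ e ≤ ILLY G κ₀ := by
    rw [ILLY_eq]
    exact Finset.sum_le_sum_of_subset_of_nonneg hs1 fun e _ _ => edgeDef_nonneg G κ₀ e
  linarith

end Aux4
/-- Moore-type bound with integral Lin–Lu–Yau Ricci curvature, in terms of the diameter. -/
theorem stmt_10 {V : Type*} [Fintype V] [DecidableEq V] (G : SimpleGraph V)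
    [DecidableRel G.Adj] (hG : G.Connected) (κ₀ : ℝ) :
    (Fintype.card V : ℝ) ≤
      1 + ∑ k ∈ Finset.Icc 1 (gDiam G),
        (((Finset.univ.sup fun v => G.degree v) : ℕ) : ℝ) ^ k *
          ∏ i ∈ Finset.Icc 1 (k - 1), (1 + (ILLY G κ₀ - (i : ℝ) * κ₀) / 2) := by
  classical
  haveI : Nonempty V := hG.nonempty
  by_cases hV : Nontrivial V
  swap
  · -- subsingleton case
    haveI hsub : Subsingleton V := not_nontrivial_iff_subsingleton.mp hV
    have hcard : Fintype.card V = 1 := by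
      have h1 : Fintype.card V ≤ 1 := Fintype.card_le_one_iff_subsingleton.mpr hsub
      have h2 : 0 < Fintype.card V := Fintype.card_pos
      omega
    have hdiam : gDiam G = 0 := by
      apply Nat.le_antisymm _ (Nat.zero_le _)
      apply Finset.sup_le
      intro p _
      have : p.1 = p.2 := Subsingleton.elim _ _
      rw [this, SimpleGraph.dist_self]
    rw [hcard, hdiam]
    simp
  haveI : Nontrivial V := hV
  have hdeg : ∀ v, 0 < G.degree v := degree_pos_of_connected G hG
  obtain ⟨x₀⟩ : Nonempty V := hG.nonempty
  set D : ℕ := gDiam G with hD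
  set dM : ℕ := Finset.univ.sup (fun v => G.degree v) with hdM
  set I : ℝ := ILLY G κ₀ with hIdef
  set F : ℕ → ℝ := fun i => 1 + (I - (i : ℝ) * κ₀) / 2 with hF
  have hDsup : D = Finset.univ.sup (fun p : V × V => G.dist p.1 p.2) := rfl
  have hdist_le : ∀ u v : V, G.dist u v ≤ D := by
    intro u v
    rw [hDsup]
    exact Finset.le_sup (f := fun p : V × V => G.dist p.1 p.2) (Finset.mem_univ (u, v))
  have hdeg_le : ∀ v : V, G.degree v ≤ dM := by
    intro v
    rw [hdM]
    exact Finset.le_sup (f := fun v => G.degree v) (Finset.mem_univ v)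
  -- nonnegativity of the factors
  have hFpos : ∀ i : ℕ, 1 ≤ i → i ≤ D → 0 ≤ F i := by
    intro i h1 h2
    obtain ⟨p, -, hp⟩ := Finset.exists_mem_eq_sup Finset.univ Finset.univ_nonempty
      (fun p : V × V => G.dist p.1 p.2)
    have hpD : G.dist p.1 p.2 = D := by rw [hDsup, ← hp]
    obtain ⟨w, hw⟩ := exists_dist_eq' G hG p.1 (G.dist p.1 p.2) p.2 rfl i (by omega)
    have hchain := chain_ILLY G hG κ₀ p.1 i w hw
    have hT := neg_degree_le_Tq G hG p.1 w
    have hdw : (0:ℝ) < G.degree w := by exact_mod_cast hdeg w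
    have hTd : (-1 : ℝ) ≤ Tq G p.1 w / G.degree w := by
      rw [le_div_iff₀ hdw]
      linarith
    simp only [hF]
    rw [← hIdef] at hchain
    linarith
  -- spheres
  set S : ℕ → Finset V := fun k => Finset.univ.filter (fun v => G.dist x₀ v = k) with hS
  have hcard : Fintype.card V = ∑ k ∈ Finset.range (D + 1), (S k).card := by
    rw [← Finset.card_univ]
    exact Finset.card_eq_sum_card_fiberwise
      (fun v _ => Finset.mem_range.mpr (Nat.lt_succ_of_le (hdist_le x₀ v)))
  have hS0 : (S 0).card = 1 := by
    have : S 0 = {x₀} := by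
      ext v
      simp only [hS, Finset.mem_filter, Finset.mem_univ, true_and, Finset.mem_singleton]
      rw [hG.dist_eq_zero_iff]
      exact eq_comm
    rw [this, Finset.card_singleton]
  have hout : ∀ k : ℕ, 1 ≤ k → ∀ y ∈ S k,
      ((((G.neighborFinset y).filter fun w => G.dist x₀ w = k + 1).card : ℝ))
        ≤ (G.degree y : ℝ) * F k := by
    intro k hk y hy
    have hyd : G.dist x₀ y = k := by
      simpa only [hS, Finset.mem_filter, Finset.mem_univ, true_and] using hy
    have h1 := out_le_Tq G hG x₀ y hyd
    have h2 := chain_ILLY G hG κ₀ x₀ k y hyd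
    rw [← hIdef] at h2
    have hdy : (0:ℝ) < G.degree y := by exact_mod_cast hdeg y
    have h4 : Tq G x₀ y / G.degree y ≤ 1 + I - (k:ℝ) * κ₀ := by linarith
    rw [div_le_iff₀ hdy] at h4
    have h5 : (G.degree y : ℝ) * F k = ((1 + I - (k:ℝ)*κ₀) * (G.degree y : ℝ)
        + (G.degree y : ℝ)) / 2 := by
      simp only [hF]; ring
    rw [h5]
    linarith
  have hsub : ∀ k : ℕ, S (k + 1) ⊆ (S k).biUnion
      (fun y => (G.neighborFinset y).filter fun w => G.dist x₀ w = k + 1) := by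
    intro k v hv
    have hvd : G.dist x₀ v = k + 1 := by
      simpa only [hS, Finset.mem_filter, Finset.mem_univ, true_and] using hv
    obtain ⟨z, hzv, hz⟩ := exists_pred G hG hvd
    refine Finset.mem_biUnion.mpr ⟨z, ?_, ?_⟩
    · simp only [hS, Finset.mem_filter, Finset.mem_univ, true_and]
      exact hz
    · simp only [Finset.mem_filter, SimpleGraph.mem_neighborFinset]
      exact ⟨hzv, hvd⟩
  have hrec : ∀ k : ℕ, 1 ≤ k → k + 1 ≤ D →
      ((S (k + 1)).card : ℝ) ≤ ((S k).card : ℝ) * ((dM : ℝ) * F k) := by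
    intro k hk hkD
    have hc1 : (S (k + 1)).card ≤ ∑ y ∈ S k,
        (((G.neighborFinset y).filter fun w => G.dist x₀ w = k + 1).card) :=
      le_trans (Finset.card_le_card (hsub k)) Finset.card_biUnion_le
    have hc2 : ((S (k + 1)).card : ℝ) ≤ ∑ y ∈ S k,
        ((((G.neighborFinset y).filter fun w => G.dist x₀ w = k + 1).card : ℝ)) := by
      exact_mod_cast hc1
    have hFk := hFpos k hk (by omega)
    calc ((S (k + 1)).card : ℝ)
        ≤ ∑ y ∈ S k, ((((G.neighborFinset y).filter
            fun w => G.dist x₀ w = k + 1).card : ℝ)) := hc2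
      _ ≤ ∑ y ∈ S k, (G.degree y : ℝ) * F k := Finset.sum_le_sum (hout k hk)
      _ ≤ ∑ _y ∈ S k, (dM : ℝ) * F k := by
          refine Finset.sum_le_sum fun y _ => ?_
          exact mul_le_mul_of_nonneg_right (by exact_mod_cast hdeg_le y) hFk
      _ = ((S k).card : ℝ) * ((dM : ℝ) * F k) := by
          rw [Finset.sum_const, nsmul_eq_mul]
  have hsphere : ∀ k : ℕ, 1 ≤ k → k ≤ D →
      ((S k).card : ℝ) ≤ (dM : ℝ) ^ k * ∏ i ∈ Finset.Icc 1 (k - 1), F i := by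
    intro k
    induction k with
    | zero => omega
    | succ n ihn =>
      intro h1 h2
      by_cases hn : n = 0
      · subst hn
        have hsub1 : S 1 ⊆ G.neighborFinset x₀ := by
          intro v hv
          have hvd : G.dist x₀ v = 1 := by
            simpa only [hS, Finset.mem_filter, Finset.mem_univ, true_and] using hv
          rw [SimpleGraph.mem_neighborFinset]
          exact SimpleGraph.dist_eq_one_iff_adj.mp hvd
        have : (S 1).card ≤ dM := le_trans (Finset.card_le_card hsub1)
          (by rw [SimpleGraph.card_neighborFinset_eq_degree]; exact hdeg_le x₀)
        have hc : ((S 1).card : ℝ) ≤ (dM : ℝ) := by exact_mod_cast this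
        simpa using hc
      · have hn1 : 1 ≤ n := by omega
        have hrec' := hrec n hn1 (by omega)
        have ihn' := ihn hn1 (by omega)
        have hFn := hFpos n hn1 (by omega)
        have hdM0 : (0:ℝ) ≤ (dM : ℝ) := Nat.cast_nonneg _
        calc ((S (n + 1)).card : ℝ)
            ≤ ((S n).card : ℝ) * ((dM : ℝ) * F n) := hrec'
          _ ≤ ((dM : ℝ) ^ n * ∏ i ∈ Finset.Icc 1 (n - 1), F i) * ((dM : ℝ) * F n) :=
              mul_le_mul_of_nonneg_right ihn' (mul_nonneg hdM0 hFn)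
          _ = (dM : ℝ) ^ (n + 1) * ∏ i ∈ Finset.Icc 1 ((n + 1) - 1), F i := by
              rw [show (n + 1) - 1 = n from rfl,
                show Finset.Icc 1 n = Finset.Icc 1 ((n - 1) + 1) by congr 1; omega,
                Finset.prod_Icc_succ_top (by omega),
                show (n - 1) + 1 = n by omega, pow_succ]
              ring
  -- assemble
  have hsplit : (Fintype.card V : ℝ) = 1 + ∑ k ∈ Finset.Icc 1 D, ((S k).card : ℝ) := by
    rw [hcard]
    rw [show Finset.range (D + 1) = insert 0 (Finset.Icc 1 D) by
      ext a; simp only [Finset.mem_range, Finset.mem_insert, Finset.mem_Icc]; omega]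
    rw [Finset.sum_insert (by simp), hS0]
    push_cast
    ring
  rw [hsplit]
  have hgoal : ∑ k ∈ Finset.Icc 1 D, ((S k).card : ℝ)
      ≤ ∑ k ∈ Finset.Icc 1 D, (dM : ℝ) ^ k * ∏ i ∈ Finset.Icc 1 (k - 1), F i := by
    refine Finset.sum_le_sum fun k hk => ?_
    obtain ⟨hk1, hk2⟩ := Finset.mem_Icc.mp hk
    exact hsphere k hk1 hk2
  calc (1 : ℝ) + ∑ k ∈ Finset.Icc 1 D, ((S k).card : ℝ)
      ≤ 1 + ∑ k ∈ Finset.Icc 1 D, (dM : ℝ) ^ k * ∏ i ∈ Finset.Icc 1 (k - 1), F i := by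
        linarith
    _ = 1 + ∑ k ∈ Finset.Icc 1 (gDiam G),
        (((Finset.univ.sup fun v => G.degree v) : ℕ) : ℝ) ^ k *
          ∏ i ∈ Finset.Icc 1 (k - 1), (1 + (ILLY G κ₀ - (i : ℝ) * κ₀) / 2) := by
        simp only [hF, hIdef, hdM, hD]
end

section
/- Let G be a finite connected simple graph with maximum degree d_M whose Lin–Lu–Yau Ricci curvature satisfies κ_LLY(x,y) ≥ κ_0 > 0 for every edge xy. Then the number of vertices n satisfies n ≤ 1 + ∑_{k=1}^{⌊2/κ_0⌋} d_M^k ∏_{i=1}^{k-1} (1 − i·κ_0/2). -/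
open Finset

namespace MyMoore

variable {V : Type*} [Fintype V]

lemma isCoupling_prod {m₁ m₂ : V → ℝ} (h₁ : IsProbMeasure m₁) (h₂ : IsProbMeasure m₂) :
    IsCoupling (fun p => m₁ p.1 * m₂ p.2) m₁ m₂ :=
  ⟨fun p => mul_nonneg (h₁.1 _) (h₂.1 _),
   fun x => by dsimp only; rw [← Finset.mul_sum, h₂.2, mul_one],
   fun y => by dsimp only; rw [← Finset.sum_mul, h₁.2, one_mul]⟩

lemma WsetNonempty {m₁ m₂ : V → ℝ} (d : V → V → ℝ) (h₁ : IsProbMeasure m₁) (h₂ : IsProbMeasure m₂) :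
    {c | ∃ A, IsCoupling A m₁ m₂ ∧ c = ∑ p : V × V, A p * d p.1 p.2}.Nonempty :=
  ⟨_, _, isCoupling_prod h₁ h₂, rfl⟩

lemma WsetBddBelow {m₁ m₂ : V → ℝ} (d : V → V → ℝ) (hd : ∀ a b, 0 ≤ d a b) :
    BddBelow {c | ∃ A, IsCoupling A m₁ m₂ ∧ c = ∑ p : V × V, A p * d p.1 p.2} := by
  refine ⟨0, ?_⟩
  rintro c ⟨B, hB, rfl⟩
  exact Finset.sum_nonneg fun p _ => mul_nonneg (hB.1 p) (hd _ _)

lemma W_le_cost {m₁ m₂ : V → ℝ} {A : V × V → ℝ} (d : V → V → ℝ) (hd : ∀ a b, 0 ≤ d a b)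
    (hA : IsCoupling A m₁ m₂) : W d m₁ m₂ ≤ ∑ p : V × V, A p * d p.1 p.2 :=
  csInf_le (WsetBddBelow d hd) ⟨A, hA, rfl⟩

lemma le_W {m₁ m₂ : V → ℝ} (d : V → V → ℝ) (f : V → ℝ)
    (hf : ∀ a b, f b - f a ≤ d a b)
    (hne : {c | ∃ A, IsCoupling A m₁ m₂ ∧ c = ∑ p : V × V, A p * d p.1 p.2}.Nonempty) :
    ∑ v, m₂ v * f v - ∑ v, m₁ v * f v ≤ W d m₁ m₂ := by
  refine le_csInf hne ?_
  rintro c ⟨A, ⟨h0, h1, h2⟩, rfl⟩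
  have hA2 : ∑ p : V × V, A p * f p.2 = ∑ v, m₂ v * f v := by
    rw [Fintype.sum_prod_type, Finset.sum_comm]
    exact Finset.sum_congr rfl fun y _ => by dsimp only; rw [← Finset.sum_mul, h2]
  have hA1 : ∑ p : V × V, A p * f p.1 = ∑ v, m₁ v * f v := by
    rw [Fintype.sum_prod_type]
    exact Finset.sum_congr rfl fun x _ => by dsimp only; rw [← Finset.sum_mul, h1]
  calc ∑ v, m₂ v * f v - ∑ v, m₁ v * f v
      = ∑ p : V × V, (A p * f p.2 - A p * f p.1) := by
        rw [Finset.sum_sub_distrib, hA1, hA2]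
    _ ≤ ∑ p : V × V, A p * d p.1 p.2 := by
        refine Finset.sum_le_sum fun p _ => ?_
        rw [← mul_sub]
        exact mul_le_mul_of_nonneg_left (hf _ _) (h0 p)

lemma W_triangle (d : V → V → ℝ) (hd : ∀ a b, 0 ≤ d a b)
    (htri : ∀ a b c, d a c ≤ d a b + d b c)
    {m₁ m₂ m₃ : V → ℝ} (h₁ : IsProbMeasure m₁) (h₂ : IsProbMeasure m₂)
    (h₃ : IsProbMeasure m₃) :
    W d m₁ m₃ ≤ W d m₁ m₂ + W d m₂ m₃ := by
  have key : ∀ A B, IsCoupling A m₁ m₂ → IsCoupling B m₂ m₃ →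
      W d m₁ m₃ ≤ (∑ p : V × V, A p * d p.1 p.2) + (∑ p : V × V, B p * d p.1 p.2) := by
    intro A B hA hB
    obtain ⟨hA0, hA1, hA2⟩ := hA
    obtain ⟨hB0, hB1, hB2⟩ := hB
    have hAz : ∀ x y, ¬ (0 < m₂ y) → A (x, y) = 0 := by
      intro x y hy
      have hm : m₂ y = 0 := le_antisymm (not_lt.mp hy) (h₂.1 y)
      have := hA2 y
      rw [hm] at this
      exact (Finset.sum_eq_zero_iff_of_nonneg (fun i _ => hA0 (i, y))).mp this x (mem_univ x)
    have hBz : ∀ y z, ¬ (0 < m₂ y) → B (y, z) = 0 := by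
      intro y z hy
      have hm : m₂ y = 0 := le_antisymm (not_lt.mp hy) (h₂.1 y)
      have := hB1 y
      rw [hm] at this
      exact (Finset.sum_eq_zero_iff_of_nonneg (fun i _ => hB0 (y, i))).mp this z (mem_univ z)
    set C : V × V → ℝ := fun p =>
      ∑ y, if 0 < m₂ y then A (p.1, y) * B (y, p.2) / m₂ y else 0 with hC
    have hC0 : ∀ p, 0 ≤ C p := by
      intro p
      refine Finset.sum_nonneg fun y _ => ?_
      split_ifs with h
      · exact div_nonneg (mul_nonneg (hA0 _) (hB0 _)) h.le
      · exact le_rfl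
    have hrow : ∀ x, ∑ z, C (x, z) = m₁ x := by
      intro x
      rw [Finset.sum_comm]
      have : ∀ y, (∑ z, if 0 < m₂ y then A (x, y) * B (y, z) / m₂ y else 0) = A (x, y) := by
        intro y
        by_cases h : 0 < m₂ y
        · simp only [if_pos h]
          rw [← Finset.sum_div, ← Finset.mul_sum, hB1 y, mul_div_assoc]
          rw [div_self (ne_of_gt h), mul_one]
        · simp only [if_neg h]
          rw [Finset.sum_const, smul_zero, hAz x y h]
      rw [Finset.sum_congr rfl fun y _ => this y, hA1]
    have hcol : ∀ z, ∑ x, C (x, z) = m₃ z := by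
      intro z
      rw [Finset.sum_comm]
      have : ∀ y, (∑ x, if 0 < m₂ y then A (x, y) * B (y, z) / m₂ y else 0) = B (y, z) := by
        intro y
        by_cases h : 0 < m₂ y
        · simp only [if_pos h]
          have : ∀ x, A (x, y) * B (y, z) / m₂ y = B (y, z) / m₂ y * A (x, y) := by
            intro x; ring
          rw [Finset.sum_congr rfl fun x _ => this x, ← Finset.mul_sum, hA2 y]
          field_simp
        · simp only [if_neg h]
          rw [Finset.sum_const, smul_zero, hBz y z h]
      rw [Finset.sum_congr rfl fun y _ => this y, hB2]
    have hcost : ∑ p : V × V, C p * d p.1 p.2 ≤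
        (∑ p : V × V, A p * d p.1 p.2) + (∑ p : V × V, B p * d p.1 p.2) := by
      have step1 : ∑ p : V × V, C p * d p.1 p.2 ≤
          ∑ x, ∑ z, ∑ y, ((if 0 < m₂ y then A (x, y) * B (y, z) / m₂ y else 0) * d x y
            + (if 0 < m₂ y then A (x, y) * B (y, z) / m₂ y else 0) * d y z) := by
        rw [Fintype.sum_prod_type]
        refine Finset.sum_le_sum fun x _ => Finset.sum_le_sum fun z _ => ?_
        have : C (x, z) * d x z = ∑ y,
            (if 0 < m₂ y then A (x, y) * B (y, z) / m₂ y else 0) * d x z := by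
          rw [hC]; exact Finset.sum_mul univ _ (d x z)
        rw [this]
        refine Finset.sum_le_sum fun y _ => ?_
        rw [← mul_add]
        refine mul_le_mul_of_nonneg_left (htri x y z) ?_
        split_ifs with h
        · exact div_nonneg (mul_nonneg (hA0 _) (hB0 _)) h.le
        · exact le_rfl
      have eq1 : (∑ x, ∑ z, ∑ y,
          (if 0 < m₂ y then A (x, y) * B (y, z) / m₂ y else 0) * d x y)
          = ∑ p : V × V, A p * d p.1 p.2 := by
        rw [Fintype.sum_prod_type]
        refine Finset.sum_congr rfl fun x _ => ?_
        rw [Finset.sum_comm]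
        refine Finset.sum_congr rfl fun y _ => ?_
        by_cases h : 0 < m₂ y
        · simp only [if_pos h]
          have : ∀ z, A (x, y) * B (y, z) / m₂ y * d x y
              = A (x, y) * d x y / m₂ y * B (y, z) := by intro z; ring
          rw [Finset.sum_congr rfl fun z _ => this z, ← Finset.mul_sum, hB1 y,
            div_mul_eq_mul_div, mul_comm (A (x,y) * d x y) (m₂ y), mul_div_assoc]
          field_simp
        · simp only [if_neg h, hAz x y h, zero_mul]
          rw [Finset.sum_const, smul_zero]
      have eq2 : (∑ x, ∑ z, ∑ y,
          (if 0 < m₂ y then A (x, y) * B (y, z) / m₂ y else 0) * d y z)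
          = ∑ p : V × V, B p * d p.1 p.2 := by
        calc (∑ x, ∑ z, ∑ y,
              (if 0 < m₂ y then A (x, y) * B (y, z) / m₂ y else 0) * d y z)
            = ∑ x, ∑ y, ∑ z,
              (if 0 < m₂ y then A (x, y) * B (y, z) / m₂ y else 0) * d y z :=
              Finset.sum_congr rfl fun x _ => Finset.sum_comm
          _ = ∑ y, ∑ x, ∑ z,
              (if 0 < m₂ y then A (x, y) * B (y, z) / m₂ y else 0) * d y z :=
              Finset.sum_comm
          _ = ∑ y, ∑ z, ∑ x,
              (if 0 < m₂ y then A (x, y) * B (y, z) / m₂ y else 0) * d y z :=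
              Finset.sum_congr rfl fun y _ => Finset.sum_comm
          _ = ∑ y, ∑ z, B (y, z) * d y z := by
              refine Finset.sum_congr rfl fun y _ => Finset.sum_congr rfl fun z _ => ?_
              by_cases h : 0 < m₂ y
              · simp only [if_pos h]
                have : ∀ x, A (x, y) * B (y, z) / m₂ y * d y z
                    = B (y, z) * d y z / m₂ y * A (x, y) := by intro x; ring
                rw [Finset.sum_congr rfl fun x _ => this x, ← Finset.mul_sum, hA2 y,
                  div_mul_eq_mul_div, mul_comm (B (y,z) * d y z) (m₂ y), mul_div_assoc]
                field_simp
              · simp only [if_neg h, hBz y z h, zero_mul]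
                rw [Finset.sum_const, smul_zero]
          _ = ∑ p : V × V, B p * d p.1 p.2 := by rw [Fintype.sum_prod_type]
      calc ∑ p : V × V, C p * d p.1 p.2 ≤ _ := step1
        _ = _ := by
            rw [← eq1, ← eq2, ← Finset.sum_add_distrib]
            refine Finset.sum_congr rfl fun x _ => ?_
            rw [← Finset.sum_add_distrib]
            exact Finset.sum_congr rfl fun z _ => Finset.sum_add_distrib
    calc W d m₁ m₃ ≤ ∑ p : V × V, C p * d p.1 p.2 :=
          W_le_cost d hd ⟨hC0, hrow, hcol⟩
      _ ≤ _ := hcost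
  have hne12 := WsetNonempty d h₁ h₂
  have hne23 := WsetNonempty d h₂ h₃
  have step2 : ∀ B (hB : IsCoupling B m₂ m₃),
      W d m₁ m₃ - (∑ p : V × V, B p * d p.1 p.2) ≤ W d m₁ m₂ := by
    intro B hB
    refine le_csInf hne12 ?_
    rintro c ⟨A, hA, rfl⟩
    linarith [key A B hA hB]
  have step3 : W d m₁ m₃ - W d m₁ m₂ ≤ W d m₂ m₃ := by
    refine le_csInf hne23 ?_
    rintro c ⟨B, hB, rfl⟩
    linarith [step2 B hB]
  linarith

end MyMoore

namespace MyMoore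

variable {V : Type*} [Fintype V] [DecidableEq V] {G : SimpleGraph V} [DecidableRel G.Adj]

lemma lazyWalk_nonneg {α : ℝ} (h0 : 0 ≤ α) (h1 : α ≤ 1) (x v : V) :
    0 ≤ lazyWalk G α x v := by
  unfold lazyWalk
  split_ifs with h h'
  · exact h0
  · exact div_nonneg (by linarith) (Nat.cast_nonneg _)
  · exact le_rfl

lemma lazyWalk_decomp (α : ℝ) (x v : V) :
    lazyWalk G α x v = (if v = x then α else 0)
      + (if G.Adj x v then (1 - α) / (G.degree x) else 0) := by
  unfold lazyWalk
  by_cases h : v = x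
  · subst h
    rw [if_pos rfl, if_pos rfl, if_neg (G.loopless.irrefl v), add_zero]
  · rw [if_neg h, if_neg h, zero_add]

lemma sum_lazyWalk_mul (α : ℝ) (x : V) (f : V → ℝ) :
    ∑ v, lazyWalk G α x v * f v
      = α * f x + ((1 - α) / (G.degree x)) * ∑ z ∈ G.neighborFinset x, f z := by
  have key : ∀ v, lazyWalk G α x v * f v = (if v = x then α * f v else 0)
      + (if G.Adj x v then ((1 - α) / (G.degree x)) * f v else 0) := by
    intro v
    rw [lazyWalk_decomp, add_mul]
    congr 1 <;> split_ifs <;> ring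
  rw [Finset.sum_congr rfl fun v _ => key v, Finset.sum_add_distrib]
  congr 1
  · rw [Finset.sum_ite_eq' univ x (fun v => α * f v), if_pos (mem_univ x)]
  · rw [← Finset.sum_filter, ← SimpleGraph.neighborFinset_eq_filter, Finset.mul_sum]

lemma sum_lazyWalk (α : ℝ) (x : V) (hdeg : 0 < G.degree x) :
    ∑ v, lazyWalk G α x v = 1 := by
  have h := sum_lazyWalk_mul (G := G) α x (fun _ => 1)
  simp only [mul_one, Finset.sum_const, nsmul_eq_mul, SimpleGraph.card_neighborFinset_eq_degree]
    at h
  rw [h, div_mul_cancel₀]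
  · ring
  · exact_mod_cast hdeg.ne'

lemma isProbMeasure_lazyWalk {α : ℝ} (h0 : 0 ≤ α) (h1 : α ≤ 1) (x : V)
    (hdeg : 0 < G.degree x) : IsProbMeasure (lazyWalk G α x) :=
  ⟨lazyWalk_nonneg h0 h1 x, sum_lazyWalk α x hdeg⟩

lemma lazyWalk_mix {γ β : ℝ} (hγ : γ < 1) (ht : (1 - β) / (1 - γ) * (1 - γ) = 1 - β)
    (x v : V) :
    lazyWalk G β x v = (1 - β) / (1 - γ) * lazyWalk G γ x v
      + (1 - (1 - β) / (1 - γ)) * (if v = x then 1 else 0) := by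
  unfold lazyWalk
  split_ifs with h h'
  · nlinarith [ht]
  · rw [mul_zero, add_zero, ← mul_div_assoc, ht]
  · ring

end MyMoore

namespace MyMoore

variable {V : Type*} [Fintype V] [DecidableEq V] {G : SimpleGraph V} [DecidableRel G.Adj]

lemma W_lazy_mix (hdeg : ∀ v : V, 0 < G.degree v) {x y : V} {γ β : ℝ}
    (hγ : γ ∈ Set.Ico (0:ℝ) 1) (hβ : β ∈ Set.Ico (0:ℝ) 1) (hle : γ ≤ β) :
    W (fun a b => (G.dist a b : ℝ)) (lazyWalk G β x) (lazyWalk G β y)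
      ≤ (1 - β) / (1 - γ) * W (fun a b => (G.dist a b : ℝ)) (lazyWalk G γ x) (lazyWalk G γ y)
        + (1 - (1 - β) / (1 - γ)) * (G.dist x y : ℝ) := by
  obtain ⟨hγ0, hγ1⟩ := hγ
  obtain ⟨hβ0, hβ1⟩ := hβ
  set t := (1 - β) / (1 - γ) with htdef
  have h1γ : (0:ℝ) < 1 - γ := by linarith
  have ht0 : 0 < t := div_pos (by linarith) h1γ
  have ht1 : t ≤ 1 := (div_le_one h1γ).mpr (by linarith)
  have htm : t * (1 - γ) = 1 - β := div_mul_cancel₀ _ h1γ.ne'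
  have hd0 : ∀ a b : V, (0:ℝ) ≤ (G.dist a b : ℝ) := fun a b => Nat.cast_nonneg _
  have key : ∀ A, IsCoupling A (lazyWalk G γ x) (lazyWalk G γ y) →
      W (fun a b => (G.dist a b : ℝ)) (lazyWalk G β x) (lazyWalk G β y)
        ≤ t * (∑ p : V × V, A p * (G.dist p.1 p.2 : ℝ)) + (1 - t) * (G.dist x y : ℝ) := by
    intro A hA
    obtain ⟨hA0, hA1, hA2⟩ := hA
    set C : V × V → ℝ := fun p => t * A p + (1 - t) * (if p = (x, y) then 1 else 0) with hCdef
    have hC : IsCoupling C (lazyWalk G β x) (lazyWalk G β y) := by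
      refine ⟨fun p => ?_, fun v => ?_, fun w => ?_⟩
      · have h01 : (0:ℝ) ≤ (if p = (x,y) then (1:ℝ) else 0) := by positivity
        have := hA0 p
        have h1t : (0:ℝ) ≤ 1 - t := by linarith
        exact add_nonneg (mul_nonneg ht0.le (hA0 p)) (mul_nonneg h1t h01)
      · show (∑ w, (t * A (v, w) + (1 - t) * (if (v, w) = (x, y) then 1 else 0)))
          = lazyWalk G β x v
        rw [Finset.sum_add_distrib, ← Finset.mul_sum, hA1, ← Finset.mul_sum]
        have : (∑ w, if (v, w) = (x, y) then (1:ℝ) else 0) = (if v = x then 1 else 0) := by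
          by_cases hv : v = x
          · subst hv; simp [Prod.ext_iff]
          · simp [Prod.ext_iff, hv]
        rw [this, ← lazyWalk_mix hγ1 htm]
      · show (∑ v, (t * A (v, w) + (1 - t) * (if (v, w) = (x, y) then 1 else 0)))
          = lazyWalk G β y w
        rw [Finset.sum_add_distrib, ← Finset.mul_sum, hA2, ← Finset.mul_sum]
        have : (∑ v, if (v, w) = (x, y) then (1:ℝ) else 0) = (if w = y then 1 else 0) := by
          by_cases hw : w = y
          · subst hw; simp [Prod.ext_iff]
          · simp [Prod.ext_iff, hw]
        rw [this, ← lazyWalk_mix hγ1 htm]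
    have hcost : ∑ p : V × V, C p * (G.dist p.1 p.2 : ℝ)
        = t * (∑ p : V × V, A p * (G.dist p.1 p.2 : ℝ)) + (1 - t) * (G.dist x y : ℝ) := by
      have : ∀ p : V × V, C p * (G.dist p.1 p.2 : ℝ)
          = t * (A p * (G.dist p.1 p.2 : ℝ))
            + (1 - t) * (if p = (x, y) then (G.dist p.1 p.2 : ℝ) else 0) := by
        intro p
        rw [hCdef]
        dsimp only
        split_ifs <;> ring
      rw [Finset.sum_congr rfl fun p _ => this p, Finset.sum_add_distrib, ← Finset.mul_sum,
        ← Finset.mul_sum, Finset.sum_ite_eq' univ (x, y) (fun p : V × V => (G.dist p.1 p.2 : ℝ)),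
        if_pos (mem_univ _)]
    rw [← hcost]
    exact W_le_cost _ hd0 hC
  have hSne := WsetNonempty (fun a b => (G.dist a b : ℝ))
    (isProbMeasure_lazyWalk hγ0 hγ1.le x (hdeg x))
    (isProbMeasure_lazyWalk hγ0 hγ1.le y (hdeg y))
  have h2 : (W (fun a b => (G.dist a b : ℝ)) (lazyWalk G β x) (lazyWalk G β y)
      - (1 - t) * (G.dist x y : ℝ)) / t
      ≤ W (fun a b => (G.dist a b : ℝ)) (lazyWalk G γ x) (lazyWalk G γ y) := by
    refine le_csInf hSne ?_
    rintro c ⟨A, hA, rfl⟩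
    rw [div_le_iff₀ ht0]
    linarith [key A hA]
  rw [div_le_iff₀ ht0] at h2
  nlinarith [h2]

lemma slope_mono (hG : G.Connected) (hdeg : ∀ v : V, 0 < G.degree v) {x y : V} (hxy : x ≠ y)
    {γ β : ℝ} (hγ : γ ∈ Set.Ico (0:ℝ) 1) (hβ : β ∈ Set.Ico (0:ℝ) 1) (hle : γ ≤ β) :
    kappaAlpha G γ x y / (1 - γ) ≤ kappaAlpha G β x y / (1 - β) := by
  have hk : 0 < G.dist x y := hG.pos_dist_of_ne hxy
  have hkR : (0:ℝ) < (G.dist x y : ℝ) := by exact_mod_cast hk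
  have hmix := W_lazy_mix (x := x) (y := y) hdeg hγ hβ hle
  obtain ⟨hγ0, hγ1⟩ := hγ
  obtain ⟨hβ0, hβ1⟩ := hβ
  have h1γ : (0:ℝ) < 1 - γ := by linarith
  have h1β : (0:ℝ) < 1 - β := by linarith
  have htm : (1 - β) / (1 - γ) * (1 - γ) = 1 - β := div_mul_cancel₀ _ h1γ.ne'
  set Wγ := W (fun a b => (G.dist a b : ℝ)) (lazyWalk G γ x) (lazyWalk G γ y) with hWγ
  set Wβ := W (fun a b => (G.dist a b : ℝ)) (lazyWalk G β x) (lazyWalk G β y) with hWβ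
  set k : ℝ := (G.dist x y : ℝ) with hkdef
  have h1 : Wβ * (1 - γ) ≤ (1 - β) * Wγ + ((1 - γ) - (1 - β)) * k := by
    calc Wβ * (1 - γ) ≤ ((1 - β) / (1 - γ) * Wγ + (1 - (1 - β) / (1 - γ)) * k) * (1 - γ) :=
          mul_le_mul_of_nonneg_right hmix h1γ.le
      _ = ((1 - β) / (1 - γ) * (1 - γ)) * Wγ + k * (1 - γ)
          - ((1 - β) / (1 - γ) * (1 - γ)) * k := by ring
      _ = (1 - β) * Wγ + ((1 - γ) - (1 - β)) * k := by rw [htm]; ring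
  unfold kappaAlpha
  rw [div_le_div_iff₀ h1γ h1β]
  have e : ∀ w : ℝ, 1 - w / k = (k - w) / k := by
    intro w; field_simp
  rw [e, e, div_mul_eq_mul_div, div_mul_eq_mul_div, div_le_div_iff₀ hkR hkR]
  nlinarith [mul_le_mul_of_nonneg_right h1 hkR.le]

end MyMoore

namespace MyMoore

variable {V : Type*} [Fintype V] [DecidableEq V] {G : SimpleGraph V} [DecidableRel G.Adj]

lemma slope_upper (hG : G.Connected) (hdeg : ∀ v : V, 0 < G.degree v) {x y : V} (hxy : x ≠ y)
    {α : ℝ} (hα : α ∈ Set.Ico (0:ℝ) 1) :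
    kappaAlpha G α x y / (1 - α) ≤
      ((G.degree y : ℝ)
        + (((G.neighborFinset y).filter (fun z => G.dist x z + 1 = G.dist x y)).card : ℝ)
        - (((G.neighborFinset y).filter (fun z => G.dist x z = G.dist x y + 1)).card : ℝ))
      / ((G.dist x y : ℝ) * (G.degree y : ℝ)) := by
  obtain ⟨hα0, hα1⟩ := hα
  have h1α : (0:ℝ) < 1 - α := by linarith
  have hk : 0 < G.dist x y := hG.pos_dist_of_ne hxy
  have hkR : (0:ℝ) < (G.dist x y : ℝ) := by exact_mod_cast hk
  have hdy : (0:ℝ) < (G.degree y : ℝ) := by exact_mod_cast hdeg y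
  have hdx : (0:ℝ) < (G.degree x : ℝ) := by exact_mod_cast hdeg x
  set k : ℝ := (G.dist x y : ℝ) with hkdef
  set dgy : ℝ := (G.degree y : ℝ) with hdgydef
  set inn : ℝ :=
    (((G.neighborFinset y).filter (fun z => G.dist x z + 1 = G.dist x y)).card : ℝ) with hinn
  set out : ℝ :=
    (((G.neighborFinset y).filter (fun z => G.dist x z = G.dist x y + 1)).card : ℝ) with hout
  set f : V → ℝ := fun v => (G.dist x v : ℝ) with hf
  set Wxy := W (fun a b => (G.dist a b : ℝ)) (lazyWalk G α x) (lazyWalk G α y) with hWdef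
  -- Lipschitz property
  have hLip : ∀ a b : V, f b - f a ≤ (G.dist a b : ℝ) := by
    intro a b
    have h := hG.dist_triangle (u := x) (v := a) (w := b)
    have : (G.dist x b : ℝ) ≤ (G.dist x a : ℝ) + (G.dist a b : ℝ) := by exact_mod_cast h
    simp only [hf]
    linarith
  have hSne := WsetNonempty (fun a b => (G.dist a b : ℝ))
    (isProbMeasure_lazyWalk hα0 hα1.le x (hdeg x))
    (isProbMeasure_lazyWalk hα0 hα1.le y (hdeg y))
  have hWge : ∑ v, lazyWalk G α y v * f v - ∑ v, lazyWalk G α x v * f v ≤ Wxy :=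
    le_W _ f hLip hSne
  -- compute the two integrals
  have hIx : ∑ v, lazyWalk G α x v * f v = 1 - α := by
    rw [sum_lazyWalk_mul]
    have h1 : f x = 0 := by simp [hf]
    have h2 : ∑ z ∈ G.neighborFinset x, f z = (G.degree x : ℝ) := by
      rw [← SimpleGraph.card_neighborFinset_eq_degree]
      rw [Finset.card_eq_sum_ones, Nat.cast_sum]
      refine Finset.sum_congr rfl fun z hz => ?_
      have hadj : G.Adj x z := (SimpleGraph.mem_neighborFinset _ _ _).mp hz
      simp [hf, SimpleGraph.dist_eq_one_iff_adj.mpr hadj]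
    rw [h1, h2, mul_zero, zero_add, div_mul_cancel₀ _ hdx.ne']
  have hS : ∑ z ∈ G.neighborFinset y, f z ≥ k * dgy + out - inn := by
    have hpt : ∀ z ∈ G.neighborFinset y, (k - 1)
        + (if G.dist x z + 1 = G.dist x y then (0:ℝ) else 1)
        + (if G.dist x z = G.dist x y + 1 then (1:ℝ) else 0) ≤ f z := by
      intro z hz
      have hadj : G.Adj y z := (SimpleGraph.mem_neighborFinset _ _ _).mp hz
      have htri1 : G.dist x y ≤ G.dist x z + 1 := by
        have := hG.dist_triangle (u := x) (v := z) (w := y)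
        have hzy : G.dist z y = 1 := SimpleGraph.dist_eq_one_iff_adj.mpr hadj.symm
        omega
      by_cases h1 : G.dist x z + 1 = G.dist x y
      · have h2 : ¬ G.dist x z = G.dist x y + 1 := by omega
        rw [if_pos h1, if_neg h2]
        have : (G.dist x y : ℝ) ≤ (G.dist x z : ℝ) + 1 := by exact_mod_cast htri1
        simp only [hf, hkdef]
        linarith
      · rw [if_neg h1]
        by_cases h2 : G.dist x z = G.dist x y + 1
        · rw [if_pos h2]
          have : (G.dist x z : ℝ) = (G.dist x y : ℝ) + 1 := by exact_mod_cast h2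
          simp only [hf, hkdef]
          linarith
        · rw [if_neg h2]
          have h3 : G.dist x y ≤ G.dist x z := by omega
          have : (G.dist x y : ℝ) ≤ (G.dist x z : ℝ) := by exact_mod_cast h3
          simp only [hf, hkdef]
          linarith
    have hsum := Finset.sum_le_sum hpt
    have e1 : ∑ z ∈ G.neighborFinset y, ((k - 1)
        + (if G.dist x z + 1 = G.dist x y then (0:ℝ) else 1)
        + (if G.dist x z = G.dist x y + 1 then (1:ℝ) else 0))
        = (k - 1) * dgy + (dgy - inn) + out := by
      rw [Finset.sum_add_distrib, Finset.sum_add_distrib]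
      congr 1
      · congr 1
        · rw [Finset.sum_const, nsmul_eq_mul, SimpleGraph.card_neighborFinset_eq_degree,
            mul_comm]
        · rw [Finset.sum_ite, Finset.sum_const, Finset.sum_const, smul_zero, zero_add,
            nsmul_eq_mul, mul_one, hinn]
          have hcard := Finset.card_filter_add_card_filter_not
            (s := G.neighborFinset y) (p := fun z => G.dist x z + 1 = G.dist x y)
          rw [SimpleGraph.card_neighborFinset_eq_degree] at hcard
          have hcR : inn + ((Finset.filter (fun a =>
              ¬ G.dist x a + 1 = G.dist x y) (G.neighborFinset y)).card : ℝ) = dgy := by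
            rw [hinn, hdgydef]
            exact_mod_cast hcard
          linarith
      · rw [Finset.sum_ite, Finset.sum_const, Finset.sum_const, smul_zero, add_zero,
          nsmul_eq_mul, mul_one, hout]
    rw [e1] at hsum
    linarith
  have hIy : ∑ v, lazyWalk G α y v * f v
      = α * k + ((1 - α) / dgy) * ∑ z ∈ G.neighborFinset y, f z := by
    rw [sum_lazyWalk_mul]
  have hWlowraw : α * k + ((1 - α) / dgy) * (k * dgy + out - inn) - (1 - α) ≤ Wxy := by
    have : ((1 - α) / dgy) * (k * dgy + out - inn)
        ≤ ((1 - α) / dgy) * ∑ z ∈ G.neighborFinset y, f z :=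
      mul_le_mul_of_nonneg_left hS (div_nonneg h1α.le hdy.le)
    rw [hIy, hIx] at hWge
    linarith
  -- final algebra
  unfold kappaAlpha
  rw [div_le_div_iff₀ h1α (mul_pos hkR hdy)]
  have e2 : ((1 - α) / dgy) * (k * dgy + out - inn) * dgy
      = (1 - α) * (k * dgy + out - inn) := by
    field_simp
  have hWd : (α * k + ((1 - α) / dgy) * (k * dgy + out - inn) - (1 - α)) * dgy ≤ Wxy * dgy :=
    mul_le_mul_of_nonneg_right hWlowraw hdy.le
  have e3 : (1 - Wxy / k) * (k * dgy) = k * dgy - Wxy * dgy := by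
    field_simp
  rw [e3]
  nlinarith [hWd, e2]

end MyMoore

namespace MyMoore

variable {V : Type*} [Fintype V] [DecidableEq V] {G : SimpleGraph V} [DecidableRel G.Adj]

lemma slope_le_two (hG : G.Connected) (hdeg : ∀ v : V, 0 < G.degree v) {x y : V} (hxy : x ≠ y)
    {α : ℝ} (hα : α ∈ Set.Ico (0:ℝ) 1) :
    kappaAlpha G α x y / (1 - α) ≤ 2 := by
  refine le_trans (slope_upper hG hdeg hxy hα) ?_
  have hk : 0 < G.dist x y := hG.pos_dist_of_ne hxy
  have hkR : (1:ℝ) ≤ (G.dist x y : ℝ) := by exact_mod_cast hk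
  have hdy : (0:ℝ) < (G.degree y : ℝ) := by exact_mod_cast hdeg y
  have hinn : (((G.neighborFinset y).filter
      (fun z => G.dist x z + 1 = G.dist x y)).card : ℝ) ≤ (G.degree y : ℝ) := by
    rw [← SimpleGraph.card_neighborFinset_eq_degree]
    exact_mod_cast Finset.card_filter_le _ _
  have hout : (0:ℝ) ≤ (((G.neighborFinset y).filter
      (fun z => G.dist x z = G.dist x y + 1)).card : ℝ) := Nat.cast_nonneg _
  rw [div_le_iff₀ (by nlinarith)]
  nlinarith

lemma kappaLLY_eq_sSup (hG : G.Connected) (hdeg : ∀ v : V, 0 < G.degree v) {x y : V}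
    (hxy : x ≠ y) :
    kappaLLY G x y = sSup ((fun α => kappaAlpha G α x y / (1 - α)) '' Set.Ico 0 1) := by
  set s := fun α => kappaAlpha G α x y / (1 - α) with hs
  have hne : (s '' Set.Ico (0:ℝ) 1).Nonempty :=
    ⟨s 0, ⟨0, ⟨le_refl 0, one_pos⟩, rfl⟩⟩
  have hbdd : BddAbove (s '' Set.Ico (0:ℝ) 1) := by
    refine ⟨2, ?_⟩
    rintro _ ⟨α, hα, rfl⟩
    exact slope_le_two hG hdeg hxy hα
  haveI : (nhdsWithin (1:ℝ) (Set.Ico (0:ℝ) 1)).NeBot := by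
    refine mem_closure_iff_nhdsWithin_neBot.mp ?_
    rw [closure_Ico (by norm_num : (0:ℝ) ≠ 1)]
    exact Set.right_mem_Icc.mpr zero_le_one
  refine Filter.Tendsto.limUnder_eq ?_
  rw [tendsto_order]
  constructor
  · intro b hb
    obtain ⟨c, ⟨α₀, hα₀, rfl⟩, hc⟩ := exists_lt_of_lt_csSup hne hb
    have hev1 : ∀ᶠ β in nhdsWithin 1 (Set.Ico (0:ℝ) 1), α₀ < β :=
      eventually_nhdsWithin_of_eventually_nhds (eventually_gt_nhds hα₀.2)
    have hev2 : ∀ᶠ β in nhdsWithin 1 (Set.Ico (0:ℝ) 1), β ∈ Set.Ico (0:ℝ) 1 :=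
      eventually_mem_nhdsWithin
    filter_upwards [hev1, hev2] with β h1 h2
    exact lt_of_lt_of_le hc (slope_mono hG hdeg hxy hα₀ h2 h1.le)
  · intro b hb
    refine Filter.Eventually.mono eventually_mem_nhdsWithin (fun β h2 => ?_)
    exact lt_of_le_of_lt (le_csSup hbdd ⟨β, h2, rfl⟩) hb

lemma slope_le_kappaLLY (hG : G.Connected) (hdeg : ∀ v : V, 0 < G.degree v) {x y : V}
    (hxy : x ≠ y) {α : ℝ} (hα : α ∈ Set.Ico (0:ℝ) 1) :
    kappaAlpha G α x y / (1 - α) ≤ kappaLLY G x y := by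
  rw [kappaLLY_eq_sSup hG hdeg hxy]
  refine le_csSup ?_ ⟨α, hα, rfl⟩
  refine ⟨2, ?_⟩
  rintro _ ⟨β, hβ, rfl⟩
  exact slope_le_two hG hdeg hxy hβ

lemma kappaLLY_le (hG : G.Connected) (hdeg : ∀ v : V, 0 < G.degree v) {x y : V}
    (hxy : x ≠ y) {c : ℝ} (h : ∀ α ∈ Set.Ico (0:ℝ) 1, kappaAlpha G α x y / (1 - α) ≤ c) :
    kappaLLY G x y ≤ c := by
  rw [kappaLLY_eq_sSup hG hdeg hxy]
  refine csSup_le ⟨_, ⟨0, ⟨le_refl 0, one_pos⟩, rfl⟩⟩ ?_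
  rintro _ ⟨α, hα, rfl⟩
  exact h α hα

end MyMoore

namespace MyMoore

variable {V : Type*} [Fintype V] [DecidableEq V] {G : SimpleGraph V} [DecidableRel G.Adj]

lemma W_lazy_self {α : ℝ} (h0 : 0 ≤ α) (h1 : α ≤ 1) (a : V) :
    W (fun a b => (G.dist a b : ℝ)) (lazyWalk G α a) (lazyWalk G α a) ≤ 0 := by
  have hA : IsCoupling (fun p : V × V => if p.1 = p.2 then lazyWalk G α a p.1 else 0)
      (lazyWalk G α a) (lazyWalk G α a) := by
    refine ⟨fun p => ?_, fun v => ?_, fun w => ?_⟩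
    · dsimp only
      split_ifs with h
      · exact lazyWalk_nonneg h0 h1 a p.1
      · exact le_rfl
    · simp
    · simpa using Finset.sum_ite_eq' Finset.univ w (fun v => lazyWalk G α a v)
  have := W_le_cost (fun a b => (G.dist a b : ℝ)) (fun a b => Nat.cast_nonneg _) hA
  refine le_trans this (le_of_eq ?_)
  refine Finset.sum_eq_zero fun p _ => ?_
  split_ifs with h
  · rw [← h, SimpleGraph.dist_self]
    simp
  · exact zero_mul _

lemma W_walk_le (hG : G.Connected) (hdeg : ∀ v : V, 0 < G.degree v) {α c : ℝ}
    (h0 : 0 ≤ α) (h1 : α < 1)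
    (hc : ∀ u v : V, G.Adj u v →
      W (fun a b => (G.dist a b : ℝ)) (lazyWalk G α u) (lazyWalk G α v) ≤ c)
    {a b : V} (w : G.Walk a b) :
    W (fun a b => (G.dist a b : ℝ)) (lazyWalk G α a) (lazyWalk G α b)
      ≤ (w.length : ℝ) * c := by
  induction w with
  | nil => simpa using W_lazy_self h0 h1.le _
  | @cons u v z hadj q ih =>
    have htri := W_triangle (fun a b => (G.dist a b : ℝ)) (fun a b => Nat.cast_nonneg _)
      (fun a b c => by exact_mod_cast hG.dist_triangle)
      (isProbMeasure_lazyWalk h0 h1.le u (hdeg u))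
      (isProbMeasure_lazyWalk h0 h1.le v (hdeg v))
      (isProbMeasure_lazyWalk h0 h1.le z (hdeg z))
    have hlen : ((SimpleGraph.Walk.cons hadj q).length : ℝ) = (q.length : ℝ) + 1 := by
      rw [SimpleGraph.Walk.length_cons]
      push_cast
      ring
    rw [hlen]
    calc W (fun a b => (G.dist a b : ℝ)) (lazyWalk G α u) (lazyWalk G α z)
        ≤ W (fun a b => (G.dist a b : ℝ)) (lazyWalk G α u) (lazyWalk G α v)
          + W (fun a b => (G.dist a b : ℝ)) (lazyWalk G α v) (lazyWalk G α z) := htri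
      _ ≤ c + (q.length : ℝ) * c := add_le_add (hc u v hadj) ih
      _ = ((q.length : ℝ) + 1) * c := by ring

lemma kappaLLY_ge_of_edges (hG : G.Connected) (hdeg : ∀ v : V, 0 < G.degree v) {κ₀ : ℝ}
    (hcurv : ∀ u v : V, G.Adj u v → κ₀ ≤ kappaLLY G u v) {x y : V} (hxy : x ≠ y) :
    κ₀ ≤ kappaLLY G x y := by
  refine le_of_forall_pos_le_add ?_
  intro ε hε
  have hch : ∀ p : V × V, ∃ β, β ∈ Set.Ico (0:ℝ) 1 ∧
      (G.Adj p.1 p.2 → κ₀ - ε < kappaAlpha G β p.1 p.2 / (1 - β)) := by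
    intro p
    by_cases hadj : G.Adj p.1 p.2
    · have hcv := hcurv p.1 p.2 hadj
      rw [kappaLLY_eq_sSup hG hdeg hadj.ne] at hcv
      have hlt : κ₀ - ε < sSup ((fun β => kappaAlpha G β p.1 p.2 / (1 - β)) '' Set.Ico 0 1) := by
        linarith
      obtain ⟨c, ⟨β, hβ, rfl⟩, hcb⟩ := exists_lt_of_lt_csSup
        ⟨_, Set.mem_image_of_mem _ (show (0:ℝ) ∈ Set.Ico (0:ℝ) 1 from ⟨le_refl 0, one_pos⟩)⟩ hlt
      exact ⟨β, hβ, fun _ => hcb⟩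
    · exact ⟨0, ⟨le_refl 0, one_pos⟩, fun h => absurd h hadj⟩
  choose g hg1 hg2 using hch
  haveI : Nonempty (V × V) := ⟨(x, y)⟩
  set α := Finset.univ.sup' Finset.univ_nonempty (fun p : V × V => g p) with hα
  have hα0 : 0 ≤ α := le_trans (hg1 (x, y)).1 (Finset.le_sup' _ (mem_univ (x, y)))
  have hα1 : α < 1 := by
    rw [hα, Finset.sup'_lt_iff]
    exact fun p _ => (hg1 p).2
  have h1α : (0:ℝ) < 1 - α := by linarith
  have hedge : ∀ u v : V, G.Adj u v → κ₀ - ε < kappaAlpha G α u v / (1 - α) := by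
    intro u v huv
    have hm := slope_mono hG hdeg huv.ne (hg1 (u, v)) ⟨hα0, hα1⟩
      (Finset.le_sup' (fun p : V × V => g p) (mem_univ (u, v)))
    exact lt_of_lt_of_le (hg2 (u, v) huv) hm
  have hWedge : ∀ u v : V, G.Adj u v →
      W (fun a b => (G.dist a b : ℝ)) (lazyWalk G α u) (lazyWalk G α v)
        ≤ 1 - (1 - α) * (κ₀ - ε) := by
    intro u v huv
    have h := hedge u v huv
    unfold kappaAlpha at h
    rw [SimpleGraph.dist_eq_one_iff_adj.mpr huv] at h
    rw [lt_div_iff₀ h1α] at h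
    push_cast at h
    rw [div_one] at h
    nlinarith
  obtain ⟨p, hp⟩ := hG.exists_walk_length_eq_dist x y
  have hWxy := W_walk_le hG hdeg hα0 hα1 hWedge p
  rw [hp] at hWxy
  have hk : 0 < G.dist x y := hG.pos_dist_of_ne hxy
  have hkR : (0:ℝ) < (G.dist x y : ℝ) := by exact_mod_cast hk
  have hslope : κ₀ - ε ≤ kappaAlpha G α x y / (1 - α) := by
    unfold kappaAlpha
    rw [le_div_iff₀ h1α]
    have hWk : W (fun a b => (G.dist a b : ℝ)) (lazyWalk G α x) (lazyWalk G α y)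
        / (G.dist x y : ℝ) ≤ 1 - (1 - α) * (κ₀ - ε) := by
      rw [div_le_iff₀ hkR]
      calc W (fun a b => (G.dist a b : ℝ)) (lazyWalk G α x) (lazyWalk G α y)
          ≤ (G.dist x y : ℝ) * (1 - (1 - α) * (κ₀ - ε)) := hWxy
        _ = (1 - (1 - α) * (κ₀ - ε)) * (G.dist x y : ℝ) := by ring
    nlinarith
  have hfin := slope_le_kappaLLY hG hdeg hxy (α := α) ⟨hα0, hα1⟩
  linarith

end MyMoore

namespace MyMoore

variable {V : Type*} [Fintype V] [DecidableEq V] {G : SimpleGraph V} [DecidableRel G.Adj]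

lemma kappaLLY_le_two_div (hG : G.Connected) (hdeg : ∀ v : V, 0 < G.degree v) {x y : V}
    (hxy : x ≠ y) : kappaLLY G x y ≤ 2 / (G.dist x y : ℝ) := by
  refine kappaLLY_le hG hdeg hxy (fun α hα => le_trans (slope_upper hG hdeg hxy hα) ?_)
  have hk : 0 < G.dist x y := hG.pos_dist_of_ne hxy
  have hkR : (0:ℝ) < (G.dist x y : ℝ) := by exact_mod_cast hk
  have hdy : (0:ℝ) < (G.degree y : ℝ) := by exact_mod_cast hdeg y
  have hinn : (((G.neighborFinset y).filter
      (fun z => G.dist x z + 1 = G.dist x y)).card : ℝ) ≤ (G.degree y : ℝ) := by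
    rw [← SimpleGraph.card_neighborFinset_eq_degree]
    exact_mod_cast Finset.card_filter_le _ _
  have hout : (0:ℝ) ≤ (((G.neighborFinset y).filter
      (fun z => G.dist x z = G.dist x y + 1)).card : ℝ) := Nat.cast_nonneg _
  rw [div_le_div_iff₀ (mul_pos hkR hdy) hkR]
  nlinarith

lemma pred_exists (hG : G.Connected) (x₀ z : V) (k : ℕ) (hz : G.dist x₀ z = k + 1) :
    ∃ y, G.Adj y z ∧ G.dist x₀ y = k := by
  obtain ⟨q, hq⟩ := hG.exists_walk_length_eq_dist z x₀
  cases q with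
  | nil =>
    rw [SimpleGraph.dist_self] at hz
    omega
  | @cons _ y' _ hadj q' =>
    refine ⟨y', hadj.symm, ?_⟩
    have hdzx : G.dist z x₀ = k + 1 := by rw [SimpleGraph.dist_comm]; exact hz
    rw [SimpleGraph.Walk.length_cons, hdzx] at hq
    have hub : G.dist y' x₀ ≤ k := by
      have := SimpleGraph.dist_le q'
      omega
    have hy'z : G.dist y' z = 1 := SimpleGraph.dist_eq_one_iff_adj.mpr hadj.symm
    have hlb : k + 1 ≤ G.dist x₀ y' + 1 := by
      have htri := hG.dist_triangle (u := x₀) (v := y') (w := z)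
      have : G.dist y' z = 1 := hy'z
      omega
    have hcomm : G.dist x₀ y' = G.dist y' x₀ := SimpleGraph.dist_comm
    omega

end MyMoore

open MyMoore

/-- Lin–Lu–Yau Moore-type bound (Theorem 4.3) for positively curved graphs. -/
theorem stmt_11 {V : Type*} [Fintype V] [DecidableEq V] (G : SimpleGraph V)
    [DecidableRel G.Adj] (hG : G.Connected) (κ₀ : ℝ) (hκ : 0 < κ₀)
    (hcurv : ∀ x y, G.Adj x y → κ₀ ≤ kappaLLY G x y) :
    (Fintype.card V : ℝ) ≤
      1 + ∑ k ∈ Finset.Icc 1 (⌊2 / κ₀⌋.toNat),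
        (((Finset.univ.sup fun v => G.degree v) : ℕ) : ℝ) ^ k *
          ∏ i ∈ Finset.Icc 1 (k - 1), (1 - (i : ℝ) * κ₀ / 2) := by
  classical
  haveI : Nonempty V := hG.nonempty
  set dM : ℝ := (((Finset.univ.sup fun v => G.degree v) : ℕ) : ℝ) with hdM
  set K : ℕ := (⌊2 / κ₀⌋).toNat with hK
  by_cases hcard : Fintype.card V ≤ 1
  · -- single vertex
    have hone : Fintype.card V = 1 := le_antisymm hcard Fintype.card_pos
    have hdeg0 : ∀ v : V, G.degree v = 0 := by
      intro v
      by_contra h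
      obtain ⟨w, hw⟩ := (G.degree_pos_iff_exists_adj v).mp (Nat.pos_of_ne_zero h)
      exact hw.ne (Fintype.card_le_one_iff.mp hcard v w)
    have hsup : (Finset.univ.sup fun v => G.degree v) = 0 :=
      Nat.le_zero.mp (Finset.sup_le fun v _ => (hdeg0 v).le)
    have hzero : ∀ k ∈ Finset.Icc 1 K,
        dM ^ k * ∏ i ∈ Finset.Icc 1 (k - 1), (1 - (i : ℝ) * κ₀ / 2) = 0 := by
      intro k hk
      rw [Finset.mem_Icc] at hk
      rw [hdM, hsup]
      push_cast
      rw [zero_pow (by omega : k ≠ 0), zero_mul]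
    rw [Finset.sum_congr rfl hzero, Finset.sum_const, smul_zero, hone]
    norm_num
  · push_neg at hcard
    have hdeg : ∀ v : V, 0 < G.degree v := by
      intro v
      obtain ⟨w, hw⟩ := Fintype.exists_ne_of_one_lt_card hcard v
      obtain ⟨p, hp⟩ := hG.exists_walk_length_eq_dist v w
      cases p with
      | nil => exact absurd rfl hw
      | cons h q => exact (G.degree_pos_iff_exists_adj v).mpr ⟨_, h⟩
    obtain ⟨x₀⟩ := hG.nonempty
    have hdMv : ∀ v : V, (G.degree v : ℝ) ≤ dM := by
      intro v
      rw [hdM]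
      exact_mod_cast Finset.le_sup (f := fun v => G.degree v) (mem_univ v)
    have hdM0 : (0:ℝ) ≤ dM := le_trans (by exact_mod_cast (hdeg x₀).le) (hdMv x₀)
    have hKR : (K : ℝ) ≤ 2 / κ₀ := by
      have hnn : (0:ℤ) ≤ ⌊2 / κ₀⌋ := Int.floor_nonneg.mpr (by positivity)
      have : ((K : ℤ) : ℝ) ≤ 2 / κ₀ := by
        rw [hK, Int.toNat_of_nonneg hnn]
        exact Int.floor_le _
      exact_mod_cast this
    -- Bonnet-Myers
    have hBM : ∀ y : V, G.dist x₀ y ≤ K := by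
      intro y
      by_cases hxy : x₀ = y
      · subst hxy
        rw [SimpleGraph.dist_self]
        exact Nat.zero_le _
      · have h1 := kappaLLY_ge_of_edges hG hdeg hcurv hxy
        have h2 := kappaLLY_le_two_div hG hdeg hxy
        have hkR : (0:ℝ) < (G.dist x₀ y : ℝ) := by
          exact_mod_cast hG.pos_dist_of_ne hxy
        have h3 : (G.dist x₀ y : ℝ) ≤ 2 / κ₀ := by
          rw [le_div_iff₀ hκ]
          have : κ₀ ≤ 2 / (G.dist x₀ y : ℝ) := le_trans h1 h2
          rw [le_div_iff₀ hkR] at this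
          linarith
        have h4 : ((G.dist x₀ y : ℤ) : ℝ) ≤ 2 / κ₀ := by exact_mod_cast h3
        have h5 : (G.dist x₀ y : ℤ) ≤ ⌊2 / κ₀⌋ := Int.le_floor.mpr h4
        have h6 := Int.toNat_le_toNat h5
        rwa [Int.toNat_natCast] at h6
    -- out-degree bound
    have hout_bound : ∀ (k : ℕ) (y : V), 1 ≤ k → (k:ℝ) * κ₀ ≤ 2 → G.dist x₀ y = k →
        ((((G.neighborFinset y).filter (fun z => G.dist x₀ z = k + 1)).card : ℝ))
          ≤ dM * (1 - (k:ℝ) * κ₀ / 2) := by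
      intro k y hk1 hk2 hdist
      have hxy : x₀ ≠ y := by
        intro h
        subst h
        rw [SimpleGraph.dist_self] at hdist
        omega
      have h1 := kappaLLY_ge_of_edges hG hdeg hcurv hxy
      have h2 := kappaLLY_le hG hdeg hxy (fun α hα => slope_upper hG hdeg hxy hα)
      rw [hdist] at h2
      have hdy : (0:ℝ) < (G.degree y : ℝ) := by exact_mod_cast hdeg y
      have hkR : (0:ℝ) < (k : ℝ) := by exact_mod_cast hk1
      set inn := (((G.neighborFinset y).filter (fun z => G.dist x₀ z + 1 = k)).card : ℝ)
        with hinn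
      set out := (((G.neighborFinset y).filter (fun z => G.dist x₀ z = k + 1)).card : ℝ)
        with hout
      have hsumio : inn + out ≤ (G.degree y : ℝ) := by
        have hdisj : Disjoint
            ((G.neighborFinset y).filter (fun z => G.dist x₀ z + 1 = k))
            ((G.neighborFinset y).filter (fun z => G.dist x₀ z = k + 1)) := by
          rw [Finset.disjoint_filter]
          intro z _ hz1 hz2
          omega
        have hcup := Finset.card_union_of_disjoint hdisj
        have hsub : ((G.neighborFinset y).filter (fun z => G.dist x₀ z + 1 = k))
            ∪ ((G.neighborFinset y).filter (fun z => G.dist x₀ z = k + 1))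
            ⊆ G.neighborFinset y :=
          Finset.union_subset (Finset.filter_subset _ _) (Finset.filter_subset _ _)
        have hle := Finset.card_le_card hsub
        rw [hcup] at hle
        rw [← SimpleGraph.card_neighborFinset_eq_degree]
        rw [hinn, hout]
        exact_mod_cast hle
      have hcomb : κ₀ ≤ ((G.degree y : ℝ) + inn - out) / ((k:ℝ) * (G.degree y : ℝ)) :=
        le_trans h1 h2
      rw [le_div_iff₀ (mul_pos hkR hdy)] at hcomb
      have hfac : (0:ℝ) ≤ 1 - (k:ℝ) * κ₀ / 2 := by linarith
      nlinarith [hdMv y]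
    -- spheres
    set S : ℕ → Finset V := fun k => Finset.univ.filter (fun y => G.dist x₀ y = k) with hS
    have hsphere : ∀ k : ℕ, 1 ≤ k → k ≤ K →
        ((S k).card : ℝ) ≤ dM ^ k * ∏ i ∈ Finset.Icc 1 (k - 1), (1 - (i : ℝ) * κ₀ / 2) := by
      intro k hk1
      induction k, hk1 using Nat.le_induction with
      | base =>
        intro _
        have hSk : S 1 = G.neighborFinset x₀ := by
          ext z
          simp only [hS, Finset.mem_filter, mem_univ, true_and,
            SimpleGraph.mem_neighborFinset]
          exact SimpleGraph.dist_eq_one_iff_adj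
        rw [hSk]
        simp only [Finset.Icc_eq_empty (by omega : ¬ (1:ℕ) ≤ 1 - 1), Finset.prod_empty,
          mul_one, pow_one]
        rw [SimpleGraph.card_neighborFinset_eq_degree]
        exact hdMv x₀
      | succ k hk ih =>
        intro hk1K
        have hkK : k ≤ K := by omega
        have hk2 : (k:ℝ) * κ₀ ≤ 2 := by
          have : (k:ℝ) ≤ (K:ℝ) := by exact_mod_cast hkK
          have h2 : (k:ℝ) ≤ 2 / κ₀ := le_trans this hKR
          rw [le_div_iff₀ hκ] at h2
          linarith
        have hfac : (0:ℝ) ≤ 1 - (k:ℝ) * κ₀ / 2 := by linarith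
        -- subset of biUnion
        have hsub : S (k+1) ⊆ (S k).biUnion
            (fun y => (G.neighborFinset y).filter (fun z => G.dist x₀ z = k + 1)) := by
          intro z hz
          rw [hS, Finset.mem_filter] at hz
          obtain ⟨y, hyz, hyd⟩ := pred_exists hG x₀ z k hz.2
          rw [Finset.mem_biUnion]
          refine ⟨y, ?_, ?_⟩
          · rw [hS, Finset.mem_filter]
            exact ⟨mem_univ y, hyd⟩
          · rw [Finset.mem_filter, SimpleGraph.mem_neighborFinset]
            exact ⟨hyz, hz.2⟩
        have hcb : (S (k+1)).card ≤
            ∑ y ∈ S k, ((G.neighborFinset y).filter (fun z => G.dist x₀ z = k + 1)).card :=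
          le_trans (Finset.card_le_card hsub) (Finset.card_biUnion_le)
        have hcbR : ((S (k+1)).card : ℝ) ≤ ((S k).card : ℝ) * (dM * (1 - (k:ℝ) * κ₀ / 2)) := by
          calc ((S (k+1)).card : ℝ)
              ≤ ∑ y ∈ S k,
                ((((G.neighborFinset y).filter (fun z => G.dist x₀ z = k + 1)).card : ℝ)) := by
                exact_mod_cast hcb
            _ ≤ ∑ _y ∈ S k, dM * (1 - (k:ℝ) * κ₀ / 2) := by
                refine Finset.sum_le_sum fun y hy => ?_
                rw [hS, Finset.mem_filter] at hy
                exact hout_bound k y hk hk2 hy.2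
            _ = ((S k).card : ℝ) * (dM * (1 - (k:ℝ) * κ₀ / 2)) := by
                rw [Finset.sum_const, nsmul_eq_mul]
        have hSk := ih hkK
        have hprod : ∏ i ∈ Finset.Icc 1 (k + 1 - 1), (1 - (i : ℝ) * κ₀ / 2)
            = (∏ i ∈ Finset.Icc 1 (k - 1), (1 - (i : ℝ) * κ₀ / 2)) * (1 - (k:ℝ) * κ₀ / 2) := by
          obtain ⟨j, rfl⟩ : ∃ j, k = j + 1 := ⟨k - 1, by omega⟩
          have h1 : j + 1 + 1 - 1 = j + 1 := by omega
          have h2 : j + 1 - 1 = j := by omega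
          rw [h1, h2, Finset.prod_Icc_succ_top (by omega : 1 ≤ j + 1)]
        have hprod0 : (0:ℝ) ≤ ∏ i ∈ Finset.Icc 1 (k - 1), (1 - (i : ℝ) * κ₀ / 2) := by
          refine Finset.prod_nonneg fun i hi => ?_
          rw [Finset.mem_Icc] at hi
          have hik : (i:ℝ) ≤ (k:ℝ) := by
            have : i ≤ k := by omega
            exact_mod_cast this
          nlinarith
        calc ((S (k+1)).card : ℝ) ≤ ((S k).card : ℝ) * (dM * (1 - (k:ℝ) * κ₀ / 2)) := hcbR
          _ ≤ (dM ^ k * ∏ i ∈ Finset.Icc 1 (k - 1), (1 - (i : ℝ) * κ₀ / 2))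
              * (dM * (1 - (k:ℝ) * κ₀ / 2)) := by
              refine mul_le_mul_of_nonneg_right hSk ?_
              positivity
          _ = dM ^ (k+1) * ∏ i ∈ Finset.Icc 1 (k + 1 - 1), (1 - (i : ℝ) * κ₀ / 2) := by
              rw [hprod, pow_succ]
              ring
    -- counting
    have hcount : (Finset.univ : Finset V).card
        = ∑ k ∈ Finset.range (K + 1), (S k).card := by
      refine Finset.card_eq_sum_card_fiberwise
        (f := fun y => G.dist x₀ y) (t := Finset.range (K + 1)) ?_
      intro y _
      rw [Finset.mem_coe, Finset.mem_range]
      exact Nat.lt_succ_of_le (hBM y)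
    have hrange : Finset.range (K + 1) = insert 0 (Finset.Icc 1 K) := by
      ext n
      simp only [Finset.mem_range, Finset.mem_insert, Finset.mem_Icc]
      omega
    have hS0 : (S 0).card = 1 := by
      have : S 0 = {x₀} := by
        ext z
        simp only [hS, Finset.mem_filter, mem_univ, true_and, Finset.mem_singleton]
        rw [hG.dist_eq_zero_iff]
        exact eq_comm
      rw [this, Finset.card_singleton]
    have hsum : (Fintype.card V : ℝ)
        = 1 + ∑ k ∈ Finset.Icc 1 K, ((S k).card : ℝ) := by
      rw [← Finset.card_univ, hcount, hrange,
        Finset.sum_insert (by simp), hS0]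
      push_cast
      ring
    rw [hsum]
    have : ∑ k ∈ Finset.Icc 1 K, ((S k).card : ℝ)
        ≤ ∑ k ∈ Finset.Icc 1 K, dM ^ k * ∏ i ∈ Finset.Icc 1 (k - 1), (1 - (i : ℝ) * κ₀ / 2) := by
      refine Finset.sum_le_sum fun k hk => ?_
      rw [Finset.mem_Icc] at hk
      exact hsphere k hk.1 hk.2
    linarith
end

section
/- For the complete graph K_m with m ≥ 2 vertices, the Lin–Lu–Yau Ricci curvature of every edge equals m/(m−1). -/
open Finset

lemma lazyWalk_top {m : ℕ} (hm : 2 ≤ m) (α : ℝ) (x : Fin m)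
    [DecidableRel (⊤ : SimpleGraph (Fin m)).Adj] (v : Fin m) :
    lazyWalk (⊤ : SimpleGraph (Fin m)) α x v
      = if v = x then α else (1 - α) / ((m : ℝ) - 1) := by
  unfold lazyWalk
  by_cases h : v = x
  · simp [h]
  · simp only [h, if_false, SimpleGraph.top_adj]
    rw [if_pos (Ne.symm h)]
    have hdeg : (⊤ : SimpleGraph (Fin m)).degree x = m - 1 := by
      rw [SimpleGraph.degree, SimpleGraph.neighborFinset_eq_filter]
      simp only [SimpleGraph.top_adj]
      rw [show Finset.filter _ univ = univ.erase x by ext; simp [eq_comm],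
        Finset.card_erase_of_mem (Finset.mem_univ x), Finset.card_univ, Fintype.card_fin]
    rw [hdeg]
    congr 1
    push_cast [Nat.cast_sub (by omega : 1 ≤ m)]
    ring

lemma W_top {m : ℕ} (hm : 2 ≤ m) {α : ℝ} (hα1 : α < 1) (hαm : 1 / (m:ℝ) ≤ α)
    (x y : Fin m) (hxy : x ≠ y) [DecidableRel (⊤ : SimpleGraph (Fin m)).Adj] :
    W (fun a b => ((⊤ : SimpleGraph (Fin m)).dist a b : ℝ))
      (lazyWalk (⊤ : SimpleGraph (Fin m)) α x) (lazyWalk (⊤ : SimpleGraph (Fin m)) α y)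
      = α - (1 - α) / ((m : ℝ) - 1) := by
  have hm1 : (1:ℝ) ≤ (m:ℝ) - 1 := by
    have : (2:ℝ) ≤ m := by exact_mod_cast hm
    linarith
  have hm0 : (0:ℝ) < (m:ℝ) - 1 := by linarith
  have hmpos : (0:ℝ) < m := by linarith
  set b : ℝ := (1 - α) / ((m:ℝ) - 1) with hb
  set t : ℝ := α - b with ht
  have hb0 : 0 ≤ b := div_nonneg (by linarith) (le_of_lt hm0)
  have ht0 : 0 ≤ t := by
    rw [ht, hb, sub_nonneg, div_le_iff₀ hm0]
    rw [div_le_iff₀ hmpos] at hαm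
    nlinarith
  have hd : ∀ a c : Fin m, ((⊤ : SimpleGraph (Fin m)).dist a c : ℝ) = if a = c then 0 else 1 := by
    intro a c
    rw [SimpleGraph.dist_top]
    split <;> simp
  -- the explicit optimal coupling
  set A : Fin m × Fin m → ℝ := fun p =>
    (if p.1 = p.2 then b else 0) + (if p = (x, y) then t else 0) with hA
  have hcoup : IsCoupling A (lazyWalk (⊤ : SimpleGraph (Fin m)) α x)
      (lazyWalk (⊤ : SimpleGraph (Fin m)) α y) := by
    refine ⟨fun p => ?_, fun v => ?_, fun v => ?_⟩
    · rw [hA]; dsimp only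
      exact add_nonneg (by split <;> simp [hb0]) (by split <;> simp [ht0])
    · rw [lazyWalk_top hm]
      simp only [hA, Finset.sum_add_distrib, Prod.mk.injEq]
      by_cases h : v = x
      · simp only [h, true_and, if_pos rfl]
        rw [Finset.sum_ite_eq univ x (fun _ => b), Finset.sum_ite_eq' univ y (fun _ => t)]
        simp [ht]
      · simp only [h, false_and, if_neg h, if_false]
        rw [Finset.sum_ite_eq univ v (fun _ => b)]
        simp [hb]
    · rw [lazyWalk_top hm]
      simp only [hA, Finset.sum_add_distrib, Prod.mk.injEq]
      by_cases h : v = y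
      · simp only [h, and_true, if_pos rfl]
        rw [Finset.sum_ite_eq' univ y (fun _ => b), Finset.sum_ite_eq' univ x (fun _ => t)]
        simp [ht, Ne.symm hxy]
      · simp only [h, and_false, if_neg h, if_false]
        rw [Finset.sum_ite_eq' univ v (fun _ => b)]
        simp [hb]
  have hcost : ∑ p : Fin m × Fin m, A p * ((⊤ : SimpleGraph (Fin m)).dist p.1 p.2 : ℝ) = t := by
    have : ∀ p : Fin m × Fin m, A p * ((⊤ : SimpleGraph (Fin m)).dist p.1 p.2 : ℝ)
        = if p = (x, y) then t else 0 := by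
      intro p
      rw [hd]
      by_cases h1 : p.1 = p.2
      · have : p ≠ (x, y) := by
          intro h; rw [h] at h1; exact hxy h1
        simp [h1, this]
      · simp only [h1, if_false, mul_one, hA, if_neg h1, zero_add]
    rw [Finset.sum_congr rfl (fun p _ => this p), Finset.sum_ite_eq' univ (x,y) (fun _ => t)]
    simp
  -- lower bound: every coupling cost ≥ t
  have hlb : ∀ c ∈ {c | ∃ A', IsCoupling A' (lazyWalk (⊤ : SimpleGraph (Fin m)) α x)
      (lazyWalk (⊤ : SimpleGraph (Fin m)) α y) ∧
      c = ∑ p : Fin m × Fin m, A' p * ((⊤ : SimpleGraph (Fin m)).dist p.1 p.2 : ℝ)}, t ≤ c := by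
    rintro c ⟨B, ⟨hB0, hB1, hB2⟩, rfl⟩
    set f : Fin m → ℝ := fun v => if v = x then 1 else 0 with hf
    have key : ∀ p : Fin m × Fin m,
        B p * (f p.1 - f p.2) ≤ B p * ((⊤ : SimpleGraph (Fin m)).dist p.1 p.2 : ℝ) := by
      intro p
      apply mul_le_mul_of_nonneg_left _ (hB0 p)
      rw [hd]
      by_cases h : p.1 = p.2 <;> simp [hf, h] <;> split <;> split <;> norm_num
    calc t ≤ ∑ p : Fin m × Fin m, B p * (f p.1 - f p.2) := by
            have : ∑ p : Fin m × Fin m, B p * (f p.1 - f p.2)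
                = ∑ v, f v * lazyWalk (⊤ : SimpleGraph (Fin m)) α x v
                  - ∑ v, f v * lazyWalk (⊤ : SimpleGraph (Fin m)) α y v := by
              simp only [mul_sub]
              rw [Finset.sum_sub_distrib]
              congr 1
              · rw [Fintype.sum_prod_type]
                simp only [← Finset.sum_mul, ← Finset.mul_sum]
                exact Finset.sum_congr rfl fun v _ => by rw [hB1 v, mul_comm]
              · rw [Fintype.sum_prod_type_right]
                simp only [← Finset.sum_mul, ← Finset.mul_sum]
                exact Finset.sum_congr rfl fun v _ => by rw [hB2 v, mul_comm]
            rw [this]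
            have h1 : ∑ v, f v * lazyWalk (⊤ : SimpleGraph (Fin m)) α x v = α := by
              rw [Finset.sum_eq_single x]
              · simp [hf, lazyWalk_top hm]
              · intro v _ hv; simp [hf, hv]
              · simp
            have h2 : ∑ v, f v * lazyWalk (⊤ : SimpleGraph (Fin m)) α y v = b := by
              rw [Finset.sum_eq_single x]
              · simp [hf, lazyWalk_top hm, hxy, hb]
              · intro v _ hv; simp [hf, hv]
              · simp
            rw [h1, h2, ht]
          _ ≤ _ := Finset.sum_le_sum fun p _ => key p
  unfold W
  have hmem : t ∈ {c | ∃ A', IsCoupling A' (lazyWalk (⊤ : SimpleGraph (Fin m)) α x)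
      (lazyWalk (⊤ : SimpleGraph (Fin m)) α y) ∧
      c = ∑ p : Fin m × Fin m, A' p * ((⊤ : SimpleGraph (Fin m)).dist p.1 p.2 : ℝ)} :=
    ⟨A, hcoup, hcost.symm⟩
  exact le_antisymm (csInf_le ⟨t, hlb⟩ hmem) (le_csInf ⟨t, hmem⟩ hlb)

/-- On the complete graph `K_m` (`m ≥ 2`), every edge has Lin–Lu–Yau curvature `m/(m-1)`. -/
theorem stmt_16 (m : ℕ) (hm : 2 ≤ m) (x y : Fin m) (hxy : x ≠ y)
    [DecidableRel (⊤ : SimpleGraph (Fin m)).Adj] :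
    kappaLLY (⊤ : SimpleGraph (Fin m)) x y = (m : ℝ) / ((m : ℝ) - 1) := by
  have hm2 : (2:ℝ) ≤ m := by exact_mod_cast hm
  have hm0 : (0:ℝ) < (m:ℝ) - 1 := by linarith
  have hmpos : (0:ℝ) < m := by linarith
  haveI : Filter.NeBot (nhdsWithin (1:ℝ) (Set.Ico (0:ℝ) 1)) := by
    rw [← mem_closure_iff_nhdsWithin_neBot, closure_Ico (by norm_num : (0:ℝ) ≠ 1)]
    exact Set.right_mem_Icc.2 zero_le_one
  have hev : ∀ᶠ α in nhdsWithin (1:ℝ) (Set.Ico (0:ℝ) 1),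
      kappaAlpha (⊤ : SimpleGraph (Fin m)) α x y / (1 - α) = (m : ℝ) / ((m : ℝ) - 1) := by
    have h1 : ∀ᶠ α in nhdsWithin (1:ℝ) (Set.Ico (0:ℝ) 1), α ∈ Set.Ico (0:ℝ) 1 :=
      self_mem_nhdsWithin
    have h2 : ∀ᶠ α in nhdsWithin (1:ℝ) (Set.Ico (0:ℝ) 1), 1 / (m:ℝ) < α := by
      apply Filter.Eventually.filter_mono nhdsWithin_le_nhds
      apply eventually_gt_nhds
      rw [div_lt_one hmpos]; linarith
    filter_upwards [h1, h2] with α hα hαm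
    have hα1 : α < 1 := hα.2
    rw [kappaAlpha, W_top hm hα1 (le_of_lt hαm) x y hxy, SimpleGraph.dist_top_of_ne hxy]
    have h1α : (1:ℝ) - α ≠ 0 := by linarith
    push_cast
    rw [div_one]
    field_simp
    ring
  have : Filter.Tendsto (fun α => kappaAlpha (⊤ : SimpleGraph (Fin m)) α x y / (1 - α))
      (nhdsWithin (1:ℝ) (Set.Ico (0:ℝ) 1)) (nhds ((m : ℝ) / ((m : ℝ) - 1))) := by
    apply Filter.Tendsto.congr' (Filter.EventuallyEq.symm hev) tendsto_const_nhds
  exact this.limUnder_eq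
end
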